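/- arXiv:2506.11897 — 5 statements merged into one kernel-verified Lean document; each statement's English description precedes it below -/
import Mathlib

section
/- For any f ∈ C²([a,b]) and any breakpoint sequence X_b over [a,b], there exists a unique not-a-knot cubic spline p ∈ 𝕊₃²(X_b) that interpolates f at X_b. -/
open Polynomial

lemma step_mono {v : ℕ → ℝ} {a b : ℕ} (h : ∀ i, a ≤ i → i + 1 ≤ b → v i < v (i+1)) :
    ∀ p q, a ≤ p → p ≤ q → q ≤ b → v p ≤ v q := by
  intro p q hap hpq hq
  induction q with
  | zero => have : p = 0 := Nat.le_zero.mp hpq; simp [this]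
  | succ n ih =>
    rcases Nat.lt_or_ge p (n+1) with h' | h'
    · exact le_trans (ih (by omega) (by omega)) (le_of_lt (h n (by omega) (by omega)))
    · have : p = n+1 := by omega
      simp [this]

lemma step_strict_mono {v : ℕ → ℝ} {a b : ℕ} (h : ∀ i, a ≤ i → i + 1 ≤ b → v i < v (i+1)) :
    ∀ p q, a ≤ p → p < q → q ≤ b → v p < v q := by
  intro p q hap hpq hq
  exact lt_of_lt_of_le (h p hap (by omega)) (step_mono h (p+1) q (by omega) (by omega) hq)

lemma hasDerivAt_tppow (n : ℕ) (hn : 2 ≤ n) (ξ x : ℝ) :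
    HasDerivAt (fun y : ℝ => (max (y - ξ) 0) ^ n) ((n : ℝ) * (max (x - ξ) 0) ^ (n - 1)) x := by
  rcases lt_trichotomy x ξ with h | h | h
  · have hmem : Set.Iio ξ ∈ nhds x := Iio_mem_nhds h
    have hev : (fun y : ℝ => (max (y - ξ) 0) ^ n) =ᶠ[nhds x] (fun _ => (0:ℝ)) := by
      filter_upwards [hmem] with y hy
      have : max (y - ξ) 0 = 0 := max_eq_right (by simp at hy; linarith)
      rw [this]; exact zero_pow (by omega)
    have := (hasDerivAt_const x (0:ℝ)).congr_of_eventuallyEq hev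
    refine this.congr_deriv ?_
    have : max (x - ξ) 0 = 0 := max_eq_right (by linarith)
    rw [this, zero_pow (by omega : n - 1 ≠ 0), mul_zero]
  · subst h
    rw [hasDerivAt_iff_tendsto_slope]
    have hval : (n : ℝ) * (max (x - x) 0) ^ (n-1) = 0 := by
      rw [show max (x - x) 0 = (0:ℝ) by simp, zero_pow (by omega : n - 1 ≠ 0), mul_zero]
    rw [hval]
    apply squeeze_zero_norm (a := fun y => |y - x| ^ (n-1))
    · intro y
      rcases eq_or_ne y x with rfl | hy
      · simp [slope_def_field]
      · have h1 : slope (fun y : ℝ => (max (y - x) 0) ^ n) x y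
            = (max (y - x) 0) ^ n / (y - x) := by
          rw [slope_def_field]
          have : max (x - x) 0 = 0 := by simp
          rw [this, zero_pow (by omega : n ≠ 0), sub_zero]
        rw [h1, Real.norm_eq_abs, abs_div]
        have hb : |(max (y - x) 0) ^ n| ≤ |y - x| ^ n := by
          rw [abs_pow]
          apply pow_le_pow_left₀ (abs_nonneg _)
          rw [abs_of_nonneg (le_max_right _ _)]
          exact max_le (le_abs_self _) (abs_nonneg _)
        have hyx : |y - x| ≠ 0 := by simpa [sub_eq_zero] using hy
        rw [div_le_iff₀ (lt_of_le_of_ne (abs_nonneg _) (Ne.symm hyx))]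
        calc |(max (y - x) 0) ^ n| ≤ |y - x| ^ n := hb
          _ = |y - x| ^ (n-1) * |y - x| := by
              rw [← pow_succ]; congr 1; omega
    · have hc : Filter.Tendsto (fun y : ℝ => |y - x| ^ (n-1)) (nhds x) (nhds (|x - x| ^ (n-1))) := by
        exact (((continuous_id.sub continuous_const).abs.pow (n-1)).tendsto x)
      have : |x - x| ^ (n-1) = 0 := by rw [sub_self, abs_zero]; exact zero_pow (by omega)
      rw [this] at hc
      exact hc.mono_left nhdsWithin_le_nhds
  · have hmem : Set.Ioi ξ ∈ nhds x := Ioi_mem_nhds h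
    have hev : (fun y : ℝ => (max (y - ξ) 0) ^ n) =ᶠ[nhds x] (fun y => (y - ξ) ^ n) := by
      filter_upwards [hmem] with y hy
      have : max (y - ξ) 0 = y - ξ := max_eq_left (by simp at hy; linarith)
      rw [this]
    have hbase : HasDerivAt (fun y : ℝ => (y - ξ) ^ n) ((n:ℝ) * (x - ξ) ^ (n-1) * 1) x :=
      ((hasDerivAt_id x).sub_const ξ).pow n
    have := hbase.congr_of_eventuallyEq hev
    refine this.congr_deriv ?_
    have : max (x - ξ) 0 = x - ξ := max_eq_left (by linarith)
    rw [this]; ring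

lemma cubic_triple_root (p : ℝ[X]) (hp : p.degree ≤ 3) (t : ℝ)
    (h0 : p.eval t = 0) (h1 : p.derivative.eval t = 0)
    (h2 : p.derivative.derivative.eval t = 0) :
    p = C (p.coeff 3) * (X - C t) ^ 3 := by
  have hnd : p.natDegree ≤ 3 := natDegree_le_iff_degree_le.mpr hp
  have hq : ((taylor t) p).natDegree ≤ 3 := by rw [natDegree_taylor]; exact hnd
  have key := sum_taylor_eq p t
  have hsum : ((taylor t) p).sum (fun i a => C a * (X - C t) ^ i)
      = ∑ i ∈ Finset.range 4, C (((taylor t) p).coeff i) * (X - C t) ^ i := by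
    exact Polynomial.sum_over_range' _ (by intro n; simp) 4 (by omega)
  have hc0 : ((taylor t) p).coeff 0 = 0 := by rw [taylor_coeff_zero]; exact h0
  have hc1 : ((taylor t) p).coeff 1 = 0 := by rw [taylor_coeff_one]; exact h1
  have hc2 : ((taylor t) p).coeff 2 = 0 := by
    have hh := congrFun (Polynomial.factorial_smul_hasseDeriv (R := ℝ) 2) p
    have heq : (Nat.factorial 2) • ((Polynomial.hasseDeriv 2) p) = derivative (derivative p) := by
      simpa [Function.iterate_succ, Function.comp] using hh
    have hev : ((Nat.factorial 2 : ℕ) : ℝ) * Polynomial.eval t ((Polynomial.hasseDeriv 2) p) = 0 := by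
      have := congrArg (fun q => Polynomial.eval t q) heq
      simp only [Polynomial.eval_smul, nsmul_eq_mul, Polynomial.eval_mul,
        Polynomial.eval_natCast] at this
      rw [this]; exact h2
    rw [taylor_coeff]
    have h2f : ((Nat.factorial 2 : ℕ) : ℝ) ≠ 0 := by norm_num [Nat.factorial]
    rcases mul_eq_zero.mp hev with h | h
    · exact absurd h h2f
    · exact h
  have hrep : p = C (((taylor t) p).coeff 3) * (X - C t) ^ 3 := by
    conv_lhs => rw [← key]
    rw [hsum]
    rw [Finset.sum_range_succ, Finset.sum_range_succ, Finset.sum_range_succ,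
      Finset.sum_range_one, hc0, hc1, hc2]
    simp
  have hcoeff : p.coeff 3 = ((taylor t) p).coeff 3 := by
    conv_lhs => rw [hrep]
    rw [Polynomial.coeff_C_mul]
    have hm : ((X - C t) ^ 3 : ℝ[X]).Monic := (monic_X_sub_C t).pow 3
    have hdeg : ((X - C t) ^ 3 : ℝ[X]).natDegree = 3 := by
      rw [natDegree_pow, natDegree_X_sub_C]
    have : ((X - C t) ^ 3 : ℝ[X]).coeff 3 = 1 := by
      have h' := hm.coeff_natDegree
      rwa [hdeg] at h'
    rw [this, mul_one]
  rw [hcoeff]; exact hrep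

lemma pl_zero : ∀ k : ℕ, ∀ (ξ u : ℕ → ℝ) (g : ℝ → ℝ),
    (∀ j, j ≤ k → ∃ α β : ℝ, ∀ x ∈ Set.Icc (ξ j) (ξ (j+1)), g x = α * x + β) →
    (∀ j, j ≤ k → ξ j < ξ (j+1)) →
    (∀ i, 1 ≤ i → i ≤ k+2 → g (u i) = 0) →
    (∀ i, 1 ≤ i → i+1 ≤ k+2 → u i < u (i+1)) →
    ξ 0 ≤ u 1 → u (k+2) ≤ ξ (k+1) →
    (∀ i, 1 ≤ i → i ≤ k → u i < ξ i) →
    (∀ i, 3 ≤ i → i ≤ k+2 → ξ (i-2) < u i) →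
    ∀ x ∈ Set.Icc (ξ 0) (ξ (k+1)), g x = 0 := by
  intro k
  induction k using Nat.strong_induction_on with
  | _ k IH =>
  intro ξ u g haff hξ hz hu hfirst hlast hlt hgt x hx
  classical
  -- monotonicity facts
  have hξle : ∀ p q, p ≤ q → q ≤ k+1 → ξ p ≤ ξ q := by
    intro p q h1 h2
    exact step_mono (a := 0) (b := k+1) (fun i _ hi => hξ i (by omega)) p q (by omega) h1 h2
  have hξlt : ∀ p q, p < q → q ≤ k+1 → ξ p < ξ q := by
    intro p q h1 h2
    exact step_strict_mono (a := 0) (b := k+1) (fun i _ hi => hξ i (by omega)) p q (by omega) h1 h2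
  have hule : ∀ p q, 1 ≤ p → p ≤ q → q ≤ k+2 → u p ≤ u q :=
    fun p q => step_mono (a := 1) (b := k+2) hu p q
  -- the piece-locating function
  have hdec : ∀ i : ℕ, DecidablePred (fun j => ξ j ≤ u i) := fun i j => Classical.propDecidable _
  set p : ℕ → ℕ := fun i => @Nat.findGreatest (fun j => ξ j ≤ u i) (hdec i) k with hpdef
  have hu0 : ∀ i, 1 ≤ i → i ≤ k+2 → ξ 0 ≤ u i := by
    intro i h1 h2
    exact le_trans hfirst (hule 1 i le_rfl h1 h2)
  have hpk : ∀ i, p i ≤ k := fun i => @Nat.findGreatest_le (fun j => ξ j ≤ u i) (hdec i) k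
  have hpo : ∀ i, 1 ≤ i → i ≤ k+2 → ξ (p i) ≤ u i := by
    intro i h1 h2
    exact @Nat.findGreatest_spec 0 (fun j => ξ j ≤ u i) (hdec i) k (Nat.zero_le k) (hu0 i h1 h2)
  have hup : ∀ i, 1 ≤ i → i ≤ k+2 → u i ≤ ξ (p i + 1) := by
    intro i h1 h2
    by_cases hc : p i = k
    · rw [hc]
      exact le_trans (hule i (k+2) h1 h2 le_rfl) hlast
    · have hik : p i + 1 ≤ k := by have := hpk i; omega
      have := @Nat.findGreatest_is_greatest (p i + 1) (fun j => ξ j ≤ u i) (hdec i) k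
        (Nat.lt_succ_self _) hik
      exact le_of_not_ge this
  have hpmono : ∀ i, 1 ≤ i → i + 1 ≤ k+2 → p i ≤ p (i+1) := by
    intro i h1 h2
    exact @Nat.le_findGreatest (p i) (fun j => ξ j ≤ u (i+1)) (hdec (i+1)) k (hpk i)
      (le_trans (hpo i h1 (by omega)) (le_of_lt (hu i h1 h2)))
  -- pigeonhole: some piece contains two consecutive u's
  have hex : ∃ m, 1 ≤ m ∧ m + 1 ≤ k + 2 ∧ p m = p (m+1) := by
    by_contra hcon
    push_neg at hcon
    have hstrict : ∀ m, 1 ≤ m → m + 1 ≤ k+2 → p m < p (m+1) := by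
      intro m h1 h2
      exact lt_of_le_of_ne (hpmono m h1 h2) (hcon m h1 h2)
    have hgrow : ∀ t, t ≤ k+1 → t ≤ p (1+t) := by
      intro t
      induction t with
      | zero => intro _; exact Nat.zero_le _
      | succ n ih =>
        intro hn
        have h1 := ih (by omega)
        have h2 := hstrict (1+n) (by omega) (by omega)
        have e : 1 + n + 1 = 1 + (n+1) := by omega
        rw [e] at h2
        omega
    have := hgrow (k+1) le_rfl
    have := hpk (1 + (k+1))
    omega
  obtain ⟨m, hm1, hm2, hmeq⟩ := hex
  set j := p m with hjdef
  have hjk : j ≤ k := hpk m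
  -- g vanishes on the piece [ξ j, ξ (j+1)]
  obtain ⟨α, β, hαβ⟩ := haff j hjk
  have humem : u m ∈ Set.Icc (ξ j) (ξ (j+1)) := by
    constructor
    · exact hpo m hm1 (by omega)
    · have h2 := hup (m+1) (by omega) hm2
      rw [← hmeq] at h2
      exact le_trans (le_of_lt (hu m hm1 hm2)) h2
  have humem1 : u (m+1) ∈ Set.Icc (ξ j) (ξ (j+1)) := by
    constructor
    · exact le_trans (hpo m hm1 (by omega)) (le_of_lt (hu m hm1 hm2))
    · have h2 := hup (m+1) (by omega) hm2
      rw [← hmeq] at h2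
      exact h2
  have he1 : α * u m + β = 0 := by rw [← hαβ _ humem]; exact hz m hm1 (by omega)
  have he2 : α * u (m+1) + β = 0 := by rw [← hαβ _ humem1]; exact hz (m+1) (by omega) hm2
  have hα : α = 0 := by
    have hne : u (m+1) - u m ≠ 0 := sub_ne_zero.mpr (ne_of_gt (hu m hm1 hm2))
    have : α * (u (m+1) - u m) = 0 := by linear_combination he2 - he1
    rcases mul_eq_zero.mp this with h | h
    · exact h
    · exact absurd h hne
  have hβ : β = 0 := by rw [hα] at he1; linarith
  have hpiece : ∀ y ∈ Set.Icc (ξ j) (ξ (j+1)), g y = 0 := by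
    intro y hy
    rw [hαβ y hy, hα, hβ]; ring
  -- left part
  have hleft : 1 ≤ j → ∀ y ∈ Set.Icc (ξ 0) (ξ j), g y = 0 := by
    intro hj1 y hy
    have hrec := IH (j-1) (by omega) ξ (fun i => if i ≤ j then u i else ξ j) g
    have hj11 : j - 1 + 1 = j := by omega
    rw [hj11] at hrec
    apply hrec
    · intro j' hj'; exact haff j' (by omega)
    · intro j' hj'; exact hξ j' (by omega)
    · intro i h1 h2
      by_cases hc : i ≤ j
      · rw [if_pos hc]; exact hz i h1 (by omega)
      · rw [if_neg hc]
        exact hpiece (ξ j) ⟨le_rfl, le_of_lt (hξlt j (j+1) (by omega) (by omega))⟩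
    · intro i h1 h2
      by_cases hc : i + 1 ≤ j
      · rw [if_pos (by omega : i ≤ j), if_pos hc]
        exact hu i h1 (by omega)
      · have hi : i = j := by omega
        rw [if_pos (by omega : i ≤ j), if_neg (by omega : ¬ i + 1 ≤ j), hi]
        exact hlt j hj1 hjk
    · rw [if_pos (by omega : 1 ≤ j)]; exact hfirst
    · rw [if_neg (by omega : ¬ j - 1 + 2 ≤ j)]
    · intro i h1 h2
      rw [if_pos (by omega : i ≤ j)]
      exact hlt i h1 (by omega)
    · intro i h1 h2
      by_cases hc : i ≤ j
      · rw [if_pos hc]; exact hgt i h1 (by omega)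
      · have hi : i = j + 1 := by omega
        rw [if_neg hc, hi]
        have : j + 1 - 2 = j - 1 := by omega
        rw [this]
        exact hξlt (j-1) j (by omega) (by omega)
    · exact hy
  -- right part
  have hright : j + 1 ≤ k → ∀ y ∈ Set.Icc (ξ (j+1)) (ξ (k+1)), g y = 0 := by
    intro hj1 y hy
    set k' := k - j - 1 with hk'
    have hrec := IH k' (by omega) (fun t => ξ (j+1+t)) (fun i => if i = 1 then ξ (j+1) else u (j+1+i)) g
    have e1 : j + 1 + 0 = j + 1 := by omega
    have e2 : j + 1 + (k'+1) = k + 1 := by omega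
    have := hrec
      (by intro j' hj'
          have := haff (j+1+j') (by omega)
          exact this)
      (by intro j' hj'; exact hξ (j+1+j') (by omega))
      (by intro i h1 h2
          by_cases hc : i = 1
          · rw [if_pos hc]
            exact hpiece (ξ (j+1)) ⟨le_of_lt (hξlt j (j+1) (by omega) (by omega)), le_rfl⟩
          · rw [if_neg hc]
            exact hz (j+1+i) (by omega) (by omega))
      (by intro i h1 h2
          by_cases hc : i = 1
          · rw [if_pos hc, if_neg (by omega : ¬ i + 1 = 1), hc]
            have h3 := hgt (j+3) (by omega) (by omega)
            have : j + 3 - 2 = j + 1 := by omega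
            rw [this] at h3
            have : j + 1 + (1 + 1) = j + 3 := by omega
            rw [this]
            exact h3
          · rw [if_neg hc, if_neg (by omega : ¬ i + 1 = 1)]
            have : j + 1 + (i+1) = (j+1+i) + 1 := by omega
            rw [this]
            exact hu (j+1+i) (by omega) (by omega))
      (by rw [if_pos rfl])
      (by rw [if_neg (by omega : ¬ k' + 2 = 1)]
          have e3 : j + 1 + (k'+2) = k + 2 := by omega
          rw [e3, e2]
          exact hlast)
      (by intro i h1 h2
          by_cases hc : i = 1
          · rw [if_pos hc, hc]
            exact hξlt (j+1) (j+1+1) (by omega) (by omega)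
          · rw [if_neg hc]
            exact hlt (j+1+i) (by omega) (by omega))
      (by intro i h1 h2
          rw [if_neg (by omega : ¬ i = 1)]
          have h3 := hgt (j+1+i) (by omega) (by omega)
          have : j + 1 + (i - 2) = j + 1 + i - 2 := by omega
          rw [this]
          exact h3)
    have := this y
    rw [e2] at this
    exact this hy
  -- combine
  rcases le_or_gt x (ξ j) with hxl | hxr
  · by_cases hj0 : j = 0
    · have hx0 : x = ξ j := le_antisymm hxl (by rw [hj0]; exact hx.1)
      refine hpiece x ⟨le_of_eq hx0.symm, ?_⟩
      rw [hx0]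
      exact le_of_lt (hξlt j (j+1) (by omega) (by omega))
    · exact hleft (by omega) x ⟨hx.1, hxl⟩
  · rcases le_or_gt x (ξ (j+1)) with hxm | hxr2
    · exact hpiece x ⟨le_of_lt hxr, hxm⟩
    · have hjk2 : j + 1 ≤ k := by
        by_contra hc
        have : j = k := by omega
        rw [this] at hxr2
        exact absurd hx.2 (not_le.mpr hxr2)
      exact hright hjk2 x ⟨le_of_lt hxr2, hx.2⟩

lemma inj_core (N : ℕ) (hN : 3 ≤ N) (l : ℕ → ℝ) (hl : ∀ i < N, l i < l (i + 1))
    (w : ℕ → ℝ)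
    (hz : ∀ i ≤ N, (w 0 + w 1 * (l i) + w 2 * (l i)^2 + w 3 * (l i)^3)
        + ∑ j ∈ Finset.range (N-3), w (j+4) * (max (l i - l (j+2)) 0)^3 = 0) :
    ∀ m, m < N + 1 → w m = 0 := by
  have hlle : ∀ p q, p ≤ q → q ≤ N → l p ≤ l q :=
    fun p q => step_mono (a := 0) (b := N) (fun i _ hi => hl i (by omega)) p q (Nat.zero_le p)
  have hllt : ∀ p q, p < q → q ≤ N → l p < l q :=
    fun p q => step_strict_mono (a := 0) (b := N) (fun i _ hi => hl i (by omega)) p q (Nat.zero_le p)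
  set s : ℝ → ℝ := fun x => (w 0 + w 1 * x + w 2 * x^2 + w 3 * x^3)
      + ∑ j ∈ Finset.range (N-3), w (j+4) * (max (x - l (j+2)) 0)^3 with hsdef
  set s1 : ℝ → ℝ := fun x => (w 1 + 2*w 2*x + 3*w 3*x^2)
      + ∑ j ∈ Finset.range (N-3), 3 * w (j+4) * (max (x - l (j+2)) 0)^2 with hs1def
  set s2 : ℝ → ℝ := fun x => (2*w 2 + 6*w 3*x)
      + ∑ j ∈ Finset.range (N-3), 6 * w (j+4) * max (x - l (j+2)) 0 with hs2def
  have hs : ∀ x, HasDerivAt s (s1 x) x := by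
    intro x
    have hcub : HasDerivAt (fun x : ℝ => w 0 + w 1 * x + w 2 * x^2 + w 3 * x^3)
        (0 + w 1 * 1 + w 2 * (2 * x^(2-1)) + w 3 * (3 * x^(3-1))) x := by
      exact (((hasDerivAt_const x (w 0)).add ((hasDerivAt_id x).const_mul (w 1))).add
        ((hasDerivAt_pow 2 x).const_mul (w 2))).add ((hasDerivAt_pow 3 x).const_mul (w 3))
    have hsum : HasDerivAt (fun x : ℝ => ∑ j ∈ Finset.range (N-3), w (j+4) * (max (x - l (j+2)) 0)^3)
        (∑ j ∈ Finset.range (N-3), w (j+4) * ((3:ℝ) * (max (x - l (j+2)) 0)^(3-1))) x := by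
      apply HasDerivAt.fun_sum
      intro j hj
      exact (by exact_mod_cast hasDerivAt_tppow 3 (by norm_num) (l (j+2)) x :
        HasDerivAt (fun y : ℝ => (max (y - l (j+2)) 0) ^ 3) ((3:ℝ) * (max (x - l (j+2)) 0) ^ (3-1)) x).const_mul (w (j+4))
    have := hcub.add hsum
    refine this.congr_deriv ?_
    rw [hs1def]
    simp only []
    rw [show (3:ℕ)-1 = 2 from rfl, show (2:ℕ)-1 = 1 from rfl]
    rw [Finset.sum_congr rfl (fun j _ => by ring :
      ∀ j ∈ Finset.range (N-3), 3 * w (j+4) * (max (x - l (j+2)) 0)^2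
        = w (j+4) * ((3:ℝ) * (max (x - l (j+2)) 0)^2))]
    ring
  have hs1 : ∀ x, HasDerivAt s1 (s2 x) x := by
    intro x
    have hcub : HasDerivAt (fun x : ℝ => w 1 + 2*w 2*x + 3*w 3*x^2)
        (0 + 2*w 2*1 + 3*w 3*(2*x^(2-1))) x := by
      exact ((hasDerivAt_const x (w 1)).add ((hasDerivAt_id x).const_mul (2*w 2))).add
        ((hasDerivAt_pow 2 x).const_mul (3*w 3))
    have hsum : HasDerivAt (fun x : ℝ => ∑ j ∈ Finset.range (N-3), 3 * w (j+4) * (max (x - l (j+2)) 0)^2)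
        (∑ j ∈ Finset.range (N-3), 3 * w (j+4) * ((2:ℝ) * (max (x - l (j+2)) 0)^(2-1))) x := by
      apply HasDerivAt.fun_sum
      intro j hj
      exact (by exact_mod_cast hasDerivAt_tppow 2 le_rfl (l (j+2)) x :
        HasDerivAt (fun y : ℝ => (max (y - l (j+2)) 0) ^ 2) ((2:ℝ) * (max (x - l (j+2)) 0) ^ (2-1)) x).const_mul (3 * w (j+4))
    have := hcub.add hsum
    refine this.congr_deriv ?_
    rw [hs2def]
    simp only []
    rw [show (2:ℕ)-1 = 1 from rfl]
    rw [Finset.sum_congr rfl (fun j _ => by rw [pow_one]; ring :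
      ∀ j ∈ Finset.range (N-3), 6 * w (j+4) * (max (x - l (j+2)) 0)
        = 3 * w (j+4) * ((2:ℝ) * (max (x - l (j+2)) 0)^1))]
    ring
  have hscont : Continuous s := by
    have : Differentiable ℝ s := fun x => (hs x).differentiableAt
    exact this.continuous
  have hs1cont : Continuous s1 := by
    have : Differentiable ℝ s1 := fun x => (hs1 x).differentiableAt
    exact this.continuous
  -- first Rolle
  have H1 : ∀ i : ℕ, 1 ≤ i → i ≤ N → ∃ c, c ∈ Set.Ioo (l (i-1)) (l i) ∧ s1 c = 0 := by
    intro i h1 h2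
    have hab : l (i-1) < l i := hllt (i-1) i (by omega) h2
    have hz1 : s (l (i-1)) = 0 := hz (i-1) (by omega)
    have hz2 : s (l i) = 0 := hz i h2
    obtain ⟨c, hc1, hc2⟩ := exists_hasDerivAt_eq_zero hab hscont.continuousOn
      (by rw [hz1, hz2]) (fun x _ => hs x)
    exact ⟨c, hc1, hc2⟩
  classical
  set t : ℕ → ℝ := fun i => if h : 1 ≤ i ∧ i ≤ N then (H1 i h.1 h.2).choose else 0 with htdef
  have ht : ∀ i, 1 ≤ i → i ≤ N → t i ∈ Set.Ioo (l (i-1)) (l i) ∧ s1 (t i) = 0 := by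
    intro i h1 h2
    rw [htdef]
    simp only [dif_pos (And.intro h1 h2)]
    exact (H1 i h1 h2).choose_spec
  -- second Rolle
  have H2 : ∀ i : ℕ, 1 ≤ i → i ≤ N-1 → ∃ c, c ∈ Set.Ioo (t i) (t (i+1)) ∧ s2 c = 0 := by
    intro i h1 h2
    obtain ⟨hti, hsi⟩ := ht i h1 (by omega)
    obtain ⟨hti1, hsi1⟩ := ht (i+1) (by omega) (by omega)
    have e : i + 1 - 1 = i := by omega
    rw [e] at hti1
    have hab : t i < t (i+1) := lt_trans hti.2 hti1.1
    obtain ⟨c, hc1, hc2⟩ := exists_hasDerivAt_eq_zero hab hs1cont.continuousOn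
      (by rw [hsi, hsi1]) (fun x _ => hs1 x)
    exact ⟨c, hc1, hc2⟩
  set u : ℕ → ℝ := fun i => if h : 1 ≤ i ∧ i ≤ N-1 then (H2 i h.1 h.2).choose else 0 with hudef
  have hu : ∀ i, 1 ≤ i → i ≤ N-1 → u i ∈ Set.Ioo (t i) (t (i+1)) ∧ s2 (u i) = 0 := by
    intro i h1 h2
    rw [hudef]
    simp only [dif_pos (And.intro h1 h2)]
    exact (H2 i h1 h2).choose_spec
  have hubd : ∀ i, 1 ≤ i → i ≤ N-1 → l (i-1) < u i ∧ u i < l (i+1) := by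
    intro i h1 h2
    obtain ⟨hui, _⟩ := hu i h1 h2
    obtain ⟨hti, _⟩ := ht i h1 (by omega)
    obtain ⟨hti1, _⟩ := ht (i+1) (by omega) (by omega)
    have e : i + 1 - 1 = i := by omega
    rw [e] at hti1
    exact ⟨lt_trans hti.1 hui.1, lt_trans hui.2 hti1.2⟩
  -- apply pl_zero
  set k := N - 3 with hkdef
  set ξ : ℕ → ℝ := fun j => if j = 0 then l 0 else if j = k+1 then l N else l (j+1) with hξdef
  have hξval : ξ 0 = l 0 := by simp [hξdef]
  have hξlast : ξ (k+1) = l N := by simp [hξdef]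
  have hξmid : ∀ j, 1 ≤ j → j ≤ k → ξ j = l (j+1) := by
    intro j h1 h2
    rw [hξdef]
    simp only [if_neg (by omega : ¬ j = 0), if_neg (by omega : ¬ j = k+1)]
  have hs2zero : ∀ x ∈ Set.Icc (l 0) (l N), s2 x = 0 := by
    have := pl_zero k ξ u s2 ?_ ?_ ?_ ?_ ?_ ?_ ?_ ?_
    · rw [hξval, hξlast] at this; exact this
    · -- affine pieces
      intro j hj
      refine ⟨6*w 3 + ∑ m ∈ (Finset.range (N-3)).filter (fun m => m+2 ≤ j+1), 6*w (m+4),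
        (2*w 2) - ∑ m ∈ (Finset.range (N-3)).filter (fun m => m+2 ≤ j+1), 6*w (m+4) * l (m+2), ?_⟩
      intro x hx
      rw [hs2def]
      simp only []
      have hterm : ∀ m ∈ Finset.range (N-3), 6 * w (m+4) * max (x - l (m+2)) 0
          = if m+2 ≤ j+1 then 6*w (m+4) * x - 6*w (m+4) * l (m+2) else 0 := by
        intro m hm
        have hmN : m < N - 3 := Finset.mem_range.mp hm
        by_cases hc : m+2 ≤ j+1
        · rw [if_pos hc]
          have hj1 : 1 ≤ j := by omega
          have hxl : l (m+2) ≤ x := by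
            refine le_trans ?_ hx.1
            rw [hξmid j hj1 hj]
            exact hlle (m+2) (j+1) hc (by omega)
          rw [max_eq_left (by linarith)]
          ring
        · rw [if_neg hc]
          have hxu : x ≤ l (m+2) := by
            refine le_trans hx.2 ?_
            by_cases hc2 : j + 1 = k + 1
            · exfalso; omega
            · have : ξ (j+1) = l (j+2) := by
                rw [hξdef]
                simp only [if_neg (by omega : ¬ j+1 = 0), if_neg hc2]
              rw [this]
              exact hlle (j+2) (m+2) (by omega) (by omega)
          rw [max_eq_right (by linarith)]
          ring
      rw [Finset.sum_congr rfl hterm, Finset.sum_ite, Finset.sum_const_zero, add_zero,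
        Finset.sum_sub_distrib, add_mul, Finset.sum_mul]
      ring
    · -- xi increasing
      intro j hj
      by_cases h0 : j = 0
      · subst h0
        rw [hξval]
        by_cases hk0 : k = 0
        · rw [hξdef]
          simp only [if_neg (by omega : ¬ (1:ℕ) = 0), if_pos (by omega : 1 = k+1)]
          exact hllt 0 N (by omega) le_rfl
        · rw [hξmid 1 le_rfl (by omega)]
          exact hllt 0 2 (by omega) (by omega)
      · by_cases hjk : j = k
        · rw [hξmid j (by omega) (by omega), hξdef]
          simp only [if_neg (by omega : ¬ j+1 = 0), if_pos (by omega : j+1 = k+1)]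
          exact hllt (j+1) N (by omega) le_rfl
        · rw [hξmid j (by omega) (by omega), hξmid (j+1) (by omega) (by omega)]
          exact hllt (j+1) (j+2) (by omega) (by omega)
    · -- zeros
      intro i h1 h2
      exact (hu i h1 (by omega)).2
    · -- u increasing
      intro i h1 h2
      have ha := (hu i h1 (by omega)).1
      have hb := (hu (i+1) (by omega) (by omega)).1
      exact lt_trans ha.2 hb.1
    · -- first
      rw [hξval]
      exact le_of_lt (hubd 1 le_rfl (by omega)).1
    · -- last
      have e : k + 2 = N - 1 := by omega
      rw [e, hξlast]
      have h := (hubd (N-1) (by omega) le_rfl).2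
      have e2 : N - 1 + 1 = N := by omega
      rw [e2] at h
      exact le_of_lt h
    · -- u i < xi i
      intro i h1 h2
      rw [hξmid i h1 h2]
      exact (hubd i h1 (by omega)).2
    · -- xi (i-2) < u i
      intro i h1 h2
      rw [hξmid (i-2) (by omega) (by omega)]
      have h := (hubd i (by omega) (by omega)).1
      have e : i - 2 + 1 = i - 1 := by omega
      rw [e]
      exact h
  -- extraction of coefficients
  have hl01 : l 0 < l 1 := hl 0 (by omega)
  have hvan : ∀ (i : ℕ) (c : ℕ → ℝ), i ≤ 2 →
      ∑ j ∈ Finset.range (N-3), c j * (max (l i - l (j+2)) 0) ^ 3 = 0 := by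
    intro i c hi2
    apply Finset.sum_eq_zero
    intro j hj
    have hj3 : j < N - 3 := Finset.mem_range.mp hj
    have : l i ≤ l (j+2) := hlle i (j+2) (by omega) (by omega)
    rw [max_eq_right (by linarith), zero_pow (by norm_num : (3:ℕ) ≠ 0), mul_zero]
  have hvan1 : ∀ (i : ℕ), i ≤ 2 →
      ∑ j ∈ Finset.range (N-3), 6 * w (j+4) * (max (l i - l (j+2)) 0) = 0 := by
    intro i hi2
    apply Finset.sum_eq_zero
    intro j hj
    have hj3 : j < N - 3 := Finset.mem_range.mp hj
    have : l i ≤ l (j+2) := hlle i (j+2) (by omega) (by omega)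
    rw [max_eq_right (by linarith), mul_zero]
  have he0 : s2 (l 0) = 0 := hs2zero _ ⟨le_rfl, hlle 0 N (by omega) le_rfl⟩
  have he1 : s2 (l 1) = 0 := hs2zero _ ⟨hlle 0 1 (by omega) (by omega), hlle 1 N (by omega) le_rfl⟩
  rw [hs2def] at he0 he1
  simp only [] at he0 he1
  rw [hvan1 0 (by omega)] at he0
  rw [hvan1 1 (by omega)] at he1
  have hw3 : w 3 = 0 := by
    have hm : 6 * w 3 * (l 1 - l 0) = 0 := by linear_combination he1 - he0
    rcases mul_eq_zero.mp hm with h | h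
    · linarith
    · exfalso; linarith
  have hw2 : w 2 = 0 := by rw [hw3] at he0; linarith
  have hcs : ∀ j, j < N-3 → w (j+4) = 0 := by
    intro j
    induction j using Nat.strong_induction_on with
    | _ j IH =>
    intro hjk
    have hev : s2 (l (j+3)) = 0 :=
      hs2zero _ ⟨hlle 0 (j+3) (by omega) (by omega), hlle (j+3) N (by omega) le_rfl⟩
    rw [hs2def] at hev
    simp only [] at hev
    have hsum : ∑ m ∈ Finset.range (N-3), 6 * w (m+4) * max (l (j+3) - l (m+2)) 0
        = 6 * w (j+4) * (l (j+3) - l (j+2)) := by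
      rw [Finset.sum_eq_single j]
      · rw [max_eq_left (by have := hllt (j+2) (j+3) (by omega) (by omega); linarith)]
      · intro m hm hne
        rcases Nat.lt_or_ge m j with h | h
        · rw [IH m h (by omega)]; ring
        · have : l (j+3) ≤ l (m+2) := hlle (j+3) (m+2) (by omega)
            (by have := Finset.mem_range.mp hm; omega)
          rw [max_eq_right (by linarith), mul_zero]
      · intro h; exact absurd (Finset.mem_range.mpr hjk) h
    rw [hsum, hw2, hw3] at hev
    have hpos : l (j+3) - l (j+2) > 0 := by
      have := hllt (j+2) (j+3) (by omega) (by omega); linarith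
    have hm : (6 * w (j+4)) * (l (j+3) - l (j+2)) = 0 := by linarith
    rcases mul_eq_zero.mp hm with h | h
    · linarith
    · exfalso; linarith
  have hez0 := hz 0 (by omega)
  have hez1 := hz 1 (by omega)
  rw [hvan 0 (fun j => w (j+4)) (by omega)] at hez0
  rw [hvan 1 (fun j => w (j+4)) (by omega)] at hez1
  rw [hw2, hw3] at hez0 hez1
  have hw1 : w 1 = 0 := by
    have hm : w 1 * (l 1 - l 0) = 0 := by linear_combination hez1 - hez0
    rcases mul_eq_zero.mp hm with h | h
    · exact h
    · exfalso; linarith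
  have hw0 : w 0 = 0 := by rw [hw1] at hez0; linarith
  intro m hm
  match m with
  | 0 => exact hw0
  | 1 => exact hw1
  | 2 => exact hw2
  | 3 => exact hw3
  | (j+4) => exact hcs j (by omega)

noncomputable def Sfun (N : ℕ) (l : ℕ → ℝ) (w : ℕ → ℝ) (x : ℝ) : ℝ :=
  (w 0 + w 1 * x + w 2 * x^2 + w 3 * x^3)
    + ∑ j ∈ Finset.range (N-3), w (j+4) * (max (x - l (j+2)) 0)^3

noncomputable def qpoly (N : ℕ) (l w : ℕ → ℝ) (i : ℕ) : ℝ[X] :=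
  (C (w 0) + C (w 1) * X + C (w 2) * X^2 + C (w 3) * X^3)
    + ∑ j ∈ Finset.range (N-3), if j+2 ≤ i then C (w (j+4)) * (X - C (l (j+2)))^3 else 0

lemma Sfun_congr (N : ℕ) (l : ℕ → ℝ) (a b : ℕ → ℝ) (x : ℝ) (hN : 3 ≤ N)
    (h : ∀ m, m < N + 1 → a m = b m) : Sfun N l a x = Sfun N l b x := by
  unfold Sfun
  rw [h 0 (by omega), h 1 (by omega), h 2 (by omega), h 3 (by omega)]
  congr 1
  apply Finset.sum_congr rfl
  intro j hj
  rw [h (j+4) (by have := Finset.mem_range.mp hj; omega)]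

lemma qpoly_congr (N : ℕ) (l : ℕ → ℝ) (a b : ℕ → ℝ) (i : ℕ) (hN : 3 ≤ N)
    (h : ∀ m, m < N + 1 → a m = b m) : qpoly N l a i = qpoly N l b i := by
  unfold qpoly
  rw [h 0 (by omega), h 1 (by omega), h 2 (by omega), h 3 (by omega)]
  congr 1
  apply Finset.sum_congr rfl
  intro j hj
  rw [h (j+4) (by have := Finset.mem_range.mp hj; omega)]

lemma qpoly_degree (N : ℕ) (l w : ℕ → ℝ) (i : ℕ) : (qpoly N l w i).degree ≤ 3 := by
  unfold qpoly
  apply le_trans (degree_add_le _ _)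
  apply max_le
  · apply le_trans (degree_add_le _ _)
    apply max_le
    · apply le_trans (degree_add_le _ _)
      apply max_le
      · apply le_trans (degree_add_le _ _)
        apply max_le
        · exact le_trans degree_C_le (by norm_num)
        · apply le_trans (degree_mul_le _ _)
          calc (C (w 1)).degree + (X : ℝ[X]).degree ≤ 0 + 1 :=
                add_le_add degree_C_le degree_X_le
            _ ≤ 3 := by norm_num
      · apply le_trans (degree_mul_le _ _)
        calc (C (w 2)).degree + ((X : ℝ[X])^2).degree ≤ 0 + 2 := by
              apply add_le_add degree_C_le
              apply le_trans (degree_pow_le _ _)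
              simp [degree_X_le]
          _ ≤ 3 := by norm_num
    · apply le_trans (degree_mul_le _ _)
      calc (C (w 3)).degree + ((X : ℝ[X])^3).degree ≤ 0 + 3 := by
            apply add_le_add degree_C_le
            apply le_trans (degree_pow_le _ _)
            simp [degree_X_le]
        _ ≤ 3 := by norm_num
  · apply le_trans (degree_sum_le _ _)
    apply Finset.sup_le
    intro j hj
    by_cases hc : j + 2 ≤ i
    · rw [if_pos hc]
      apply le_trans (degree_mul_le _ _)
      calc (C (w (j+4))).degree + ((X - C (l (j+2)))^3).degree ≤ 0 + 3 := by
            apply add_le_add degree_C_le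
            rw [degree_pow, degree_X_sub_C]
            norm_num
        _ ≤ 3 := by norm_num
    · rw [if_neg hc]
      simp

lemma cube_eval_zero (a t : ℝ) :
    eval t (C a * (X - C t)^3) = 0 := by simp

lemma cube_deriv (a t : ℝ) :
    derivative (C a * (X - C t)^3) = C (3*a) * (X - C t)^2 := by
  rw [derivative_C_mul, derivative_pow, derivative_X_sub_C]
  simp only [Nat.cast_ofNat, map_mul]
  ring_nf

lemma qpoly_eval (N : ℕ) (l w : ℕ → ℝ) (i p : ℕ)
    (hcond : ∀ j, j < N - 3 → ((j + 2 ≤ i) ↔ l (j+2) ≤ l p)) :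
    eval (l p) (qpoly N l w i) = Sfun N l w (l p) := by
  unfold qpoly Sfun
  rw [eval_add, eval_finset_sum]
  congr 1
  · simp
  · apply Finset.sum_congr rfl
    intro j hj
    have hj3 := Finset.mem_range.mp hj
    by_cases hc : j + 2 ≤ i
    · rw [if_pos hc]
      rw [max_eq_left (by have := (hcond j hj3).mp hc; linarith)]
      simp
    · rw [if_neg hc]
      have : ¬ l (j+2) ≤ l p := fun h => hc ((hcond j hj3).mpr h)
      rw [max_eq_right (by linarith)]
      simp

lemma sq_deriv (a t : ℝ) :
    derivative (C a * (X - C t)^2) = C (2*a) * (X - C t) := by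
  rw [derivative_C_mul, derivative_pow, derivative_X_sub_C]
  simp only [Nat.cast_ofNat, map_mul]
  ring_nf

lemma cube_evals (a t : ℝ) :
    eval t (C a * (X - C t)^3) = 0 ∧
    eval t (derivative (C a * (X - C t)^3)) = 0 ∧
    eval t (derivative (derivative (C a * (X - C t)^3))) = 0 := by
  refine ⟨by simp, ?_, ?_⟩
  · rw [cube_deriv]; simp
  · rw [cube_deriv, sq_deriv]; simp

lemma qpoly_diff (N : ℕ) (l w : ℕ → ℝ) (i : ℕ) :
    qpoly N l w (i+1) = qpoly N l w i
      + (if 1 ≤ i ∧ i - 1 < N - 3 then C (w (i+3)) * (X - C (l (i+1)))^3 else 0) := by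
  unfold qpoly
  by_cases h : 1 ≤ i ∧ i - 1 < N - 3
  · rw [if_pos h]
    have hsplit : ∀ j ∈ Finset.range (N-3),
        (if j+2 ≤ i+1 then C (w (j+4)) * (X - C (l (j+2)))^3 else 0)
        = (if j+2 ≤ i then C (w (j+4)) * (X - C (l (j+2)))^3 else 0)
          + (if j = i-1 then C (w (j+4)) * (X - C (l (j+2)))^3 else 0) := by
      intro j _
      by_cases h1 : j+2 ≤ i
      · rw [if_pos h1, if_pos (by omega), if_neg (by omega), add_zero]
      · by_cases h2 : j = i-1
        · rw [if_pos (by omega), if_neg h1, if_pos h2, zero_add]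
        · rw [if_neg (by omega), if_neg h1, if_neg h2, add_zero]
    rw [Finset.sum_congr rfl hsplit, Finset.sum_add_distrib,
      Finset.sum_ite_eq' (Finset.range (N-3)) (i-1)
        (fun j => C (w (j+4)) * (X - C (l (j+2)))^3),
      if_pos (Finset.mem_range.mpr h.2)]
    rw [show i - 1 + 4 = i + 3 by omega, show i - 1 + 2 = i + 1 by omega]
    ring
  · rw [if_neg h, add_zero]
    congr 1
    apply Finset.sum_congr rfl
    intro j hj
    have hj3 := Finset.mem_range.mp hj
    by_cases h1 : i = 0
    · rw [if_neg (by omega), if_neg (by omega)]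
    · rw [if_pos (by omega), if_pos (by omega)]

lemma qpoly_smooth (N : ℕ) (l w : ℕ → ℝ) (i : ℕ) :
    eval (l (i+1)) (qpoly N l w (i+1)) = eval (l (i+1)) (qpoly N l w i) ∧
    eval (l (i+1)) (derivative (qpoly N l w (i+1)))
      = eval (l (i+1)) (derivative (qpoly N l w i)) ∧
    eval (l (i+1)) (derivative (derivative (qpoly N l w (i+1))))
      = eval (l (i+1)) (derivative (derivative (qpoly N l w i))) := by
  rw [qpoly_diff N l w i]
  by_cases h : 1 ≤ i ∧ i - 1 < N - 3
  · rw [if_pos h]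
    obtain ⟨e0, e1, e2⟩ := cube_evals (w (i+3)) (l (i+1))
    refine ⟨?_, ?_, ?_⟩
    · rw [eval_add, e0, add_zero]
    · rw [derivative_add, eval_add, e1, add_zero]
    · rw [derivative_add, derivative_add, eval_add, e2, add_zero]
  · rw [if_neg h]
    simp

lemma qpoly_01 (N : ℕ) (l w : ℕ → ℝ) : qpoly N l w 0 = qpoly N l w 1 := by
  have := qpoly_diff N l w 0
  rw [if_neg (by omega)] at this
  rw [this, add_zero]

lemma qpoly_last (N : ℕ) (hN : 3 ≤ N) (l w : ℕ → ℝ) :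
    qpoly N l w (N-2) = qpoly N l w (N-1) := by
  have := qpoly_diff N l w (N-2)
  rw [if_neg (by omega), add_zero] at this
  rw [show N - 2 + 1 = N - 1 by omega] at this
  rw [this]

lemma cubic_form (p : ℝ[X]) (hp : p.degree ≤ 3) :
    p = C (p.coeff 0) + C (p.coeff 1) * X + C (p.coeff 2) * X^2 + C (p.coeff 3) * X^3 := by
  ext n
  match n with
  | 0 => simp
  | 1 => simp [coeff_C]
  | 2 => simp [coeff_C]
  | 3 => simp [coeff_C]
  | (m+4) =>
    have h1 : p.coeff (m+4) = 0 := by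
      apply coeff_eq_zero_of_degree_lt
      apply lt_of_le_of_lt hp
      exact_mod_cast (by omega : 3 < m + 4)
    rw [h1]
    simp [coeff_C]

noncomputable def vext (N : ℕ) (v : Fin (N+1) → ℝ) : ℕ → ℝ :=
  fun n => if h : n < N+1 then v ⟨n, h⟩ else 0

lemma Sfun_add (N : ℕ) (l : ℕ → ℝ) (a b : ℕ → ℝ) (x : ℝ) :
    Sfun N l (fun n => a n + b n) x = Sfun N l a x + Sfun N l b x := by
  unfold Sfun
  rw [Finset.sum_congr rfl
    (fun j _ => add_mul (a (j+4)) (b (j+4)) ((max (x - l (j+2)) 0)^3)),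
    Finset.sum_add_distrib]
  ring

lemma Sfun_smul (N : ℕ) (l : ℕ → ℝ) (c : ℝ) (a : ℕ → ℝ) (x : ℝ) :
    Sfun N l (fun n => c * a n) x = c * Sfun N l a x := by
  unfold Sfun
  rw [Finset.sum_congr rfl
    (fun j _ => mul_assoc c (a (j+4)) ((max (x - l (j+2)) 0)^3)),
    ← Finset.mul_sum]
  ring

noncomputable def Tmap (N : ℕ) (l : ℕ → ℝ) : (Fin (N+1) → ℝ) →ₗ[ℝ] (Fin (N+1) → ℝ) where
  toFun v := fun i => Sfun N l (vext N v) (l i.val)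
  map_add' v w := by
    funext i
    have hv : vext N (v + w) = fun n => vext N v n + vext N w n := by
      funext n; unfold vext; split <;> simp
    show Sfun N l (vext N (v+w)) (l i.val) = _
    rw [hv, Sfun_add]
    rfl
  map_smul' c v := by
    funext i
    have hv : vext N (c • v) = fun n => c * vext N v n := by
      funext n; unfold vext; split <;> simp
    show Sfun N l (vext N (c • v)) (l i.val) = _
    rw [hv, Sfun_smul]
    rfl

lemma Tmap_apply (N : ℕ) (l : ℕ → ℝ) (v : Fin (N+1) → ℝ) (i : Fin (N+1)) :
    Tmap N l v i = Sfun N l (vext N v) (l i.val) := rfl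

/-- `q : ℕ → Polynomial ℝ` (with `q i` relevant for `i < N`) is the family of cubic pieces
of a not-a-knot cubic spline in `𝕊₃²(X_b)`, over the breakpoints `l 0 < l 1 < ⋯ < l N`,
interpolating `f` at the breakpoints.  The pieces are cubic polynomials glued `C²` at the
interior breakpoints; the not-a-knot condition says the first two pieces coincide and the
last two pieces coincide. -/
def IsNotAKnotInterp (N : ℕ) (l : ℕ → ℝ) (f : ℝ → ℝ) (q : ℕ → Polynomial ℝ) : Prop :=
  (∀ i < N, (q i).degree ≤ 3) ∧
  (∀ i, i + 1 < N → (q i).eval (l (i + 1)) = (q (i + 1)).eval (l (i + 1))) ∧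
  (∀ i, i + 1 < N →
    ((q i).derivative).eval (l (i + 1)) = ((q (i + 1)).derivative).eval (l (i + 1))) ∧
  (∀ i, i + 1 < N →
    ((q i).derivative.derivative).eval (l (i + 1)) =
      ((q (i + 1)).derivative.derivative).eval (l (i + 1))) ∧
  q 0 = q 1 ∧ q (N - 2) = q (N - 1) ∧
  (∀ i < N, (q i).eval (l i) = f (l i)) ∧
  (q (N - 1)).eval (l N) = f (l N)

/-- **Lemma 4.2 (unique existence of the not-a-knot interpolant).**
For any `f ∈ C²([a,b])` and any breakpoint sequence `a = l 0 < ⋯ < l N = b` with `N ≥ 3`,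
there exists a unique not-a-knot cubic spline in `𝕊₃²(X_b)` that interpolates `f`
(uniqueness of the cubic pieces `q i` for `i < N`). -/
theorem stmt2 (N : ℕ) (hN : 3 ≤ N) (l : ℕ → ℝ) (hl : ∀ i < N, l i < l (i + 1))
    (f : ℝ → ℝ) (hf : ContDiffOn ℝ 2 f (Set.Icc (l 0) (l N))) :
    ∃ q : ℕ → Polynomial ℝ, IsNotAKnotInterp N l f q ∧
      ∀ q' : ℕ → Polynomial ℝ, IsNotAKnotInterp N l f q' → ∀ i < N, q' i = q i := by
  classical
  have hlle : ∀ p q, p ≤ q → q ≤ N → l p ≤ l q :=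
    fun p q => step_mono (a := 0) (b := N) (fun i _ hi => hl i (by omega)) p q (Nat.zero_le p)
  have hllt : ∀ p q, p < q → q ≤ N → l p < l q :=
    fun p q => step_strict_mono (a := 0) (b := N) (fun i _ hi => hl i (by omega)) p q (Nat.zero_le p)
  have hcond1 : ∀ i, i < N → ∀ j, j < N - 3 → ((j + 2 ≤ i) ↔ l (j+2) ≤ l i) := by
    intro i hi j hj
    constructor
    · intro h; exact hlle (j+2) i h (by omega)
    · intro h
      by_contra hc
      have : l i < l (j+2) := hllt i (j+2) (by omega) (by omega)
      linarith
  have hcondN : ∀ j, j < N - 3 → ((j + 2 ≤ N - 1) ↔ l (j+2) ≤ l N) := by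
    intro j hj
    constructor
    · intro _; exact hlle (j+2) N (by omega) le_rfl
    · intro _; omega
  -- injectivity of the collocation map
  have hinj : Function.Injective (Tmap N l) := by
    rw [injective_iff_map_eq_zero]
    intro v hv
    have hzz : ∀ i, i ≤ N → (vext N v 0 + vext N v 1 * (l i) + vext N v 2 * (l i)^2
        + vext N v 3 * (l i)^3)
        + ∑ j ∈ Finset.range (N-3), vext N v (j+4) * (max (l i - l (j+2)) 0)^3 = 0 := by
      intro i hi
      have h1 := congrFun hv ⟨i, by omega⟩
      rw [Tmap_apply] at h1
      have h2 : Sfun N l (vext N v) (l i) = 0 := h1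
      unfold Sfun at h2
      exact h2
    have hc := inj_core N hN l hl (vext N v) hzz
    funext m
    have h3 := hc m.val m.isLt
    unfold vext at h3
    rw [dif_pos m.isLt] at h3
    simpa using h3
  obtain ⟨v, hv⟩ := (LinearMap.injective_iff_surjective).mp hinj (fun i => f (l i.val))
  set w : ℕ → ℝ := vext N v with hwdef
  have hinterp : ∀ i, i < N → eval (l i) (qpoly N l w i) = f (l i) := by
    intro i hi
    rw [qpoly_eval N l w i i (hcond1 i hi)]
    have := congrFun hv ⟨i, by omega⟩
    rw [Tmap_apply] at this
    exact this
  have hinterpN : eval (l N) (qpoly N l w (N-1)) = f (l N) := by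
    rw [qpoly_eval N l w (N-1) N hcondN]
    have := congrFun hv ⟨N, by omega⟩
    rw [Tmap_apply] at this
    exact this
  refine ⟨qpoly N l w, ⟨fun i _ => qpoly_degree N l w i,
    fun i _ => (qpoly_smooth N l w i).1.symm,
    fun i _ => (qpoly_smooth N l w i).2.1.symm,
    fun i _ => (qpoly_smooth N l w i).2.2.symm,
    qpoly_01 N l w, qpoly_last N hN l w,
    fun i hi => hinterp i hi, hinterpN⟩, ?_⟩
  -- uniqueness
  intro q' hq' i hi
  obtain ⟨hdeg', hev', hd1', hd2', h01', hNN', hint', hlast'⟩ := hq'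
  set w' : ℕ → ℝ := fun m => if m < 4 then (q' 0).coeff m
    else (q' (m-2) - q' (m-3)).coeff 3 with hw'def
  have hrep : ∀ i, i < N → q' i = qpoly N l w' i := by
    intro i
    induction i with
    | zero =>
      intro _
      unfold qpoly
      have hsum0 : ∑ j ∈ Finset.range (N-3),
          (if j+2 ≤ 0 then C (w' (j+4)) * (X - C (l (j+2)))^3 else 0) = 0 :=
        Finset.sum_eq_zero (fun j _ => if_neg (by omega))
      rw [hsum0, add_zero]
      have h4 : ∀ m, m < 4 → w' m = (q' 0).coeff m := by
        intro m hm; rw [hw'def]; simp only [if_pos hm]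
      rw [h4 0 (by omega), h4 1 (by omega), h4 2 (by omega), h4 3 (by omega)]
      exact cubic_form (q' 0) (hdeg' 0 (by omega))
    | succ i IH =>
      intro hiN
      have hqi := IH (by omega)
      rw [qpoly_diff N l w' i, ← hqi]
      by_cases hi0 : i = 0
      · subst hi0
        rw [if_neg (by omega), add_zero]
        exact h01'.symm
      · by_cases hic : i - 1 < N - 3
        · rw [if_pos ⟨by omega, hic⟩]
          have hdeg3 : (q' (i+1) - q' i).degree ≤ 3 :=
            le_trans (degree_sub_le _ _) (max_le (hdeg' (i+1) hiN) (hdeg' i (by omega)))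
          have he0 : (q' (i+1) - q' i).eval (l (i+1)) = 0 := by
            rw [eval_sub, hev' i hiN, sub_self]
          have he1 : (q' (i+1) - q' i).derivative.eval (l (i+1)) = 0 := by
            rw [derivative_sub, eval_sub, hd1' i hiN, sub_self]
          have he2 : (q' (i+1) - q' i).derivative.derivative.eval (l (i+1)) = 0 := by
            rw [derivative_sub, derivative_sub, eval_sub, hd2' i hiN, sub_self]
          have hfac := cubic_triple_root (q' (i+1) - q' i) hdeg3 (l (i+1)) he0 he1 he2
          have hw'val : w' (i+3) = (q' (i+1) - q' i).coeff 3 := by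
            rw [hw'def]
            simp only [if_neg (by omega : ¬ i + 3 < 4)]
            rw [show i + 3 - 2 = i + 1 by omega, show i + 3 - 3 = i by omega]
          rw [hw'val, ← hfac]
          ring
        · rw [if_neg (by omega), add_zero]
          have hieq : i = N - 2 := by omega
          rw [hieq, show N - 2 + 1 = N - 1 by omega]
          exact hNN'.symm
  have hTv' : Tmap N l (fun m : Fin (N+1) => w' m.val) = (fun i => f (l i.val)) := by
    funext j
    rw [Tmap_apply]
    rw [Sfun_congr N l (vext N (fun m : Fin (N+1) => w' m.val)) w' (l j.val) hN
      (by intro m hm; unfold vext; rw [dif_pos hm])]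
    rcases Nat.lt_or_ge j.val N with hj | hj
    · rw [← qpoly_eval N l w' j.val j.val (hcond1 j.val hj), ← hrep j.val hj]
      exact hint' j.val hj
    · have hjN : j.val = N := by have := j.isLt; omega
      rw [hjN, ← qpoly_eval N l w' (N-1) N hcondN, ← hrep (N-1) (by omega)]
      exact hlast'
  have hveq : (fun m : Fin (N+1) => w' m.val) = v := hinj (hTv'.trans hv.symm)
  have hww : ∀ m, m < N + 1 → w' m = w m := by
    intro m hm
    have := congrFun hveq ⟨m, hm⟩
    simp only [] at this
    rw [hwdef]
    unfold vext
    rw [dif_pos hm]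
    exact this
  rw [hrep i hi]
  exact qpoly_congr N l w' w i hN hww
end

section
/- Let N ≥ 5 and let A ∈ ℝ^{(N+1)×(N+1)} be the matrix with rows indexed by 0,…,N given by: row 0 has entries λ₁, −1, μ₁ in columns 0, 1, 2; row i for 1 ≤ i ≤ N−1 has entries μ_i, 2, λ_i in columns i−1, i, i+1; row N has entries λ_{N−1}, −1, μ_{N−1} in columns N−2, N−1, N; all other entries are zero, where μ_i, λ_i ∈ (0,1) and μ_i + λ_i = 1 for every i = 1,…,N−1. Then A is invertible and ‖A⁻¹‖_∞ < 18. -/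
/-- The matrix norm induced by the max norm on `ℝⁿ`: the maximum absolute row sum. -/
noncomputable def rowSumNorm {n : ℕ} (A : Matrix (Fin n) (Fin n) ℝ) : ℝ :=
  ⨆ i, ∑ j, |A i j|


set_option maxHeartbeats 1000000 in
lemma corner (a p q x0 x1 x2 x3 y0 y1 y2 c m : ℝ)
    (ha0 : 0 < a) (ha1 : a < 1)
    (hp0 : 0 < p) (hp1 : p < 1) (hq0 : 0 < q) (hq1 : q < 1)
    (e0 : (1 - a) * x0 - x1 + a * x2 = y0)
    (e1 : a * x0 + 2 * x1 + (1 - a) * x2 = y1)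
    (e2 : p * x1 + 2 * x2 + q * x3 = y2)
    (hc : 0 ≤ c) (hm : 0 ≤ m)
    (hy0 : |y0| ≤ c) (hy1 : |y1| ≤ c) (hy2 : |y2| ≤ c) (hx3 : |x3| ≤ m) :
    |x1| ≤ (3 * c + m) / 2 ∧ |x0| ≤ 4 * c + m := by
  set D : ℝ := 4 - 2 * a + p * (2 * a - 1) with hD
  have hDpos : 0 < D := by nlinarith
  have h1 : D * x1 = (-2 * a) * y0 + (2 * (1 - a)) * y1 + (2 * a - 1) * (y2 - q * x3) := by
    linear_combination (-2 * a) * e0 + (2 * (1 - a)) * e1 + (2 * a - 1) * e2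
  have h0 : D * x0 = (4 - (1 - a) * p) * y0 + (2 + a * p) * y1 - (1 + a) * (y2 - q * x3) := by
    linear_combination (4 - (1 - a) * p) * e0 + (2 + a * p) * e1 + (-(1 + a)) * e2
  have hb3 : |y2 - q * x3| ≤ c + m := by
    calc |y2 - q * x3| ≤ |y2| + |q * x3| := abs_sub _ _
    _ ≤ c + q * m := by
        rw [abs_mul, abs_of_pos hq0]
        nlinarith [abs_nonneg x3]
    _ ≤ c + m := by nlinarith
  have t1 : |(-2 * a) * y0| ≤ 2 * a * c := by
    rw [abs_mul, abs_of_nonpos (by nlinarith : (-2 * a : ℝ) ≤ 0)]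
    nlinarith [abs_nonneg y0]
  have t2 : |(2 * (1 - a)) * y1| ≤ 2 * (1 - a) * c := by
    rw [abs_mul, abs_of_nonneg (by nlinarith : (0:ℝ) ≤ 2 * (1 - a))]
    nlinarith [abs_nonneg y1]
  have t3 : |(2 * a - 1) * (y2 - q * x3)| ≤ |2 * a - 1| * (c + m) := by
    rw [abs_mul]
    exact mul_le_mul_of_nonneg_left hb3 (abs_nonneg _)
  have key1 : D * |x1| ≤ 2 * c + |2 * a - 1| * (c + m) := by
    have hDx : D * |x1| = |D * x1| := by
      rw [abs_mul, abs_of_pos hDpos]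
    rw [hDx, h1]
    calc |(-2 * a) * y0 + (2 * (1 - a)) * y1 + (2 * a - 1) * (y2 - q * x3)|
        ≤ |(-2 * a) * y0| + |(2 * (1 - a)) * y1| + |(2 * a - 1) * (y2 - q * x3)| :=
          abs_add_three _ _ _
      _ ≤ 2 * a * c + 2 * (1 - a) * c + |2 * a - 1| * (c + m) := by linarith
      _ = 2 * c + |2 * a - 1| * (c + m) := by ring
  have hX := abs_nonneg x1
  have hx1 : |x1| ≤ (3 * c + m) / 2 := by
    rcases le_or_gt a (1 / 2) with hcase | hcase
    · have habs : |2 * a - 1| = 1 - 2 * a := by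
        rw [abs_of_nonpos (by linarith)]; ring
      rw [habs] at key1
      have hD3 : (3 : ℝ) ≤ D := by nlinarith [mul_nonneg (by linarith : (0:ℝ) ≤ 1 - 2*a) (by linarith : (0:ℝ) ≤ 1 - p)]
      nlinarith [mul_nonneg (sub_nonneg.mpr hD3) hX,
        mul_nonneg (by linarith : (0:ℝ) ≤ 2 * a) (by linarith : (0:ℝ) ≤ c + m)]
    · have habs : |2 * a - 1| = 2 * a - 1 := abs_of_nonneg (by linarith)
      rw [habs] at key1
      have hD3 : (4 - 2 * a : ℝ) ≤ D := by nlinarith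
      have h4 : (4 - 2 * a) * (2 * |x1|) ≤ (4 - 2 * a) * (3 * c + m) := by
        nlinarith [mul_nonneg (sub_nonneg.mpr hD3) hX,
          mul_nonneg (by linarith : (0:ℝ) ≤ 1 - a) hc,
          mul_nonneg (by linarith : (0:ℝ) ≤ 1 - a) hm]
      have := le_of_mul_le_mul_left h4 (by linarith : (0:ℝ) < 4 - 2 * a)
      linarith
  refine ⟨hx1, ?_⟩
  have s1 : |(4 - (1 - a) * p) * y0| ≤ (4 - (1 - a) * p) * c := by
    rw [abs_mul, abs_of_nonneg (by nlinarith : (0:ℝ) ≤ 4 - (1 - a) * p)]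
    nlinarith [abs_nonneg y0]
  have s2 : |(2 + a * p) * y1| ≤ (2 + a * p) * c := by
    rw [abs_mul, abs_of_nonneg (by nlinarith : (0:ℝ) ≤ 2 + a * p)]
    nlinarith [abs_nonneg y1]
  have s3 : |(1 + a) * (y2 - q * x3)| ≤ (1 + a) * (c + m) := by
    rw [abs_mul, abs_of_nonneg (by linarith : (0:ℝ) ≤ 1 + a)]
    exact mul_le_mul_of_nonneg_left hb3 (by linarith)
  have key0 : D * |x0| ≤ (4 - (1 - a) * p) * c + (2 + a * p) * c + (1 + a) * (c + m) := by
    have hDx : D * |x0| = |D * x0| := by rw [abs_mul, abs_of_pos hDpos]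
    rw [hDx, h0]
    calc |(4 - (1 - a) * p) * y0 + (2 + a * p) * y1 - (1 + a) * (y2 - q * x3)|
        ≤ |(4 - (1 - a) * p) * y0 + (2 + a * p) * y1| + |(1 + a) * (y2 - q * x3)| := abs_sub _ _
      _ ≤ |(4 - (1 - a) * p) * y0| + |(2 + a * p) * y1| + |(1 + a) * (y2 - q * x3)| := by
          have := abs_add_le ((4 - (1 - a) * p) * y0) ((2 + a * p) * y1); linarith
      _ ≤ (4 - (1 - a) * p) * c + (2 + a * p) * c + (1 + a) * (c + m) := by linarith
  have hX0 := abs_nonneg x0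
  -- D * (4c + m) ≥ RHS of key0
  have hfinal : D * |x0| ≤ D * (4 * c + m) := by
    rcases le_or_gt a (1 / 2) with hcase | hcase
    · nlinarith [mul_nonneg (by linarith : (0:ℝ) ≤ 1 - 2*a) (by linarith : (0:ℝ) ≤ 1 - p),
        mul_nonneg (by linarith : (0:ℝ) ≤ 1 - a) hc,
        mul_nonneg (by linarith : (0:ℝ) ≤ 1 - a) hm,
        mul_nonneg (mul_nonneg (by linarith : (0:ℝ) ≤ 1 - 2*a) (by linarith : (0:ℝ) ≤ 1 - p)) hc,
        mul_nonneg (mul_nonneg (by linarith : (0:ℝ) ≤ 1 - 2*a) (by linarith : (0:ℝ) ≤ 1 - p)) hm]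
    · nlinarith [mul_nonneg (by linarith : (0:ℝ) ≤ 1 - a) hc,
        mul_nonneg (by linarith : (0:ℝ) ≤ 1 - a) hm,
        mul_nonneg (mul_nonneg (by linarith : (0:ℝ) ≤ 2*a - 1) hp0.le) hc,
        mul_nonneg (mul_nonneg (by linarith : (0:ℝ) ≤ 2*a - 1) hp0.le) hm]
  exact le_of_mul_le_mul_left hfinal hDpos

set_option maxHeartbeats 1000000 in
lemma auxBound (M : ℕ) (μ lam : ℕ → ℝ)
    (hμlam : ∀ i, 1 ≤ i → i ≤ M + 4 →
      (0 < μ i ∧ μ i < 1) ∧ (0 < lam i ∧ lam i < 1) ∧ μ i + lam i = 1)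
    (X Y : ℕ → ℝ) (c : ℝ) (hc : 0 ≤ c)
    (h0 : lam 1 * X 0 - X 1 + μ 1 * X 2 = Y 0)
    (hmid : ∀ i, 1 ≤ i → i ≤ M + 4 →
      μ i * X (i - 1) + 2 * X i + lam i * X (i + 1) = Y i)
    (hNe : lam (M + 4) * X (M + 3) - X (M + 4) + μ (M + 4) * X (M + 5) = Y (M + 5))
    (hY : ∀ i, i ≤ M + 5 → |Y i| ≤ c) :
    ∀ j, j ≤ M + 5 → |X j| ≤ 6 * c := by
  -- max over the inner interior indices
  obtain ⟨k, hk, hkmax⟩ := Finset.exists_max_image (Finset.Icc 2 (M + 3))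
    (fun i => |X i|) ⟨2, by simp⟩
  rw [Finset.mem_Icc] at hk
  set m : ℝ := |X k| with hmdef
  have hm : 0 ≤ m := abs_nonneg _
  have hkmax' : ∀ i, 2 ≤ i → i ≤ M + 3 → |X i| ≤ m := fun i h1 h2 =>
    hkmax i (Finset.mem_Icc.mpr ⟨h1, h2⟩)
  -- data for index 1, 2, M+4, M+3
  obtain ⟨⟨hμ1p, hμ1l⟩, ⟨hl1p, hl1l⟩, hs1⟩ := hμlam 1 (by omega) (by omega)
  obtain ⟨⟨hμ2p, hμ2l⟩, ⟨hl2p, hl2l⟩, hs2⟩ := hμlam 2 (by omega) (by omega)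
  obtain ⟨⟨hμ4p, hμ4l⟩, ⟨hl4p, hl4l⟩, hs4⟩ := hμlam (M + 4) (by omega) (by omega)
  obtain ⟨⟨hμ3p, hμ3l⟩, ⟨hl3p, hl3l⟩, hs3⟩ := hμlam (M + 3) (by omega) (by omega)
  -- top corner
  have e1t := hmid 1 (by omega) (by omega)
  have e2t := hmid 2 (by omega) (by omega)
  norm_num at e1t e2t
  have hl1 : lam 1 = 1 - μ 1 := by linarith
  have topc := corner (μ 1) (μ 2) (lam 2) (X 0) (X 1) (X 2) (X 3) (Y 0) (Y 1) (Y 2) c m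
    hμ1p hμ1l hμ2p hμ2l hl2p hl2l
    (by rw [← hl1] at *; linarith) (by rw [hl1] at e1t; linarith) (by linarith)
    hc hm (hY 0 (by omega)) (hY 1 (by omega)) (hY 2 (by omega))
    (hkmax' 3 (by omega) (by omega))
  obtain ⟨hX1, hX0⟩ := topc
  -- bottom corner
  have e1b := hmid (M + 4) (by omega) (by omega)
  have e2b := hmid (M + 3) (by omega) (by omega)
  have i1 : M + 4 - 1 = M + 3 := by omega
  have i2 : M + 4 + 1 = M + 5 := by omega
  have i3 : M + 3 - 1 = M + 2 := by omega
  have i4 : M + 3 + 1 = M + 4 := by omega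
  rw [i1, i2] at e1b
  rw [i3, i4] at e2b
  have hμ4 : μ (M + 4) = 1 - lam (M + 4) := by linarith
  have botc := corner (lam (M + 4)) (lam (M + 3)) (μ (M + 3))
    (X (M + 5)) (X (M + 4)) (X (M + 3)) (X (M + 2)) (Y (M + 5)) (Y (M + 4)) (Y (M + 3)) c m
    hl4p hl4l hl3p hl3l hμ3p hμ3l
    (by rw [← hμ4]; linarith) (by rw [hμ4] at e1b; linarith) (by linarith)
    hc hm (hY (M + 5) (by omega)) (hY (M + 4) (by omega)) (hY (M + 3) (by omega))
    (hkmax' (M + 2) (by omega) (by omega))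
  obtain ⟨hXN1, hXN⟩ := botc
  -- neighbor bound
  set MM : ℝ := max m ((3 * c + m) / 2) with hMM
  have hMM0 : 0 ≤ MM := le_trans hm (le_max_left _ _)
  have hnb : ∀ i, 1 ≤ i → i ≤ M + 4 → |X i| ≤ MM := by
    intro i h1 h2
    rcases eq_or_ne i 1 with rfl | hi1
    · exact le_trans hX1 (le_max_right _ _)
    rcases eq_or_ne i (M + 4) with rfl | hi4
    · exact le_trans hXN1 (le_max_right _ _)
    exact le_trans (hkmax' i (by omega) (by omega)) (le_max_left _ _)
  -- interior estimate at k
  obtain ⟨⟨hμkp, hμkl⟩, ⟨hlkp, hlkl⟩, hsk⟩ := hμlam k (by omega) (by omega)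
  have ek := hmid k (by omega) (by omega)
  have hk2 : 2 * m ≤ c + MM := by
    have hXk : 2 * X k = Y k - μ k * X (k - 1) - lam k * X (k + 1) := by linarith
    have habs : |2 * X k| ≤ |Y k| + |μ k * X (k - 1)| + |lam k * X (k + 1)| := by
      rw [hXk]
      calc |Y k - μ k * X (k - 1) - lam k * X (k + 1)|
          ≤ |Y k - μ k * X (k - 1)| + |lam k * X (k + 1)| := abs_sub _ _
        _ ≤ |Y k| + |μ k * X (k - 1)| + |lam k * X (k + 1)| := by
            have := abs_sub (Y k) (μ k * X (k - 1)); linarith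
    have h2m : |2 * X k| = 2 * m := by
      rw [abs_mul]; norm_num [hmdef]
    have hn1 : |μ k * X (k - 1)| ≤ μ k * MM := by
      rw [abs_mul, abs_of_pos hμkp]
      exact mul_le_mul_of_nonneg_left (hnb (k - 1) (by omega) (by omega)) hμkp.le
    have hn2 : |lam k * X (k + 1)| ≤ lam k * MM := by
      rw [abs_mul, abs_of_pos hlkp]
      exact mul_le_mul_of_nonneg_left (hnb (k + 1) (by omega) (by omega)) hlkp.le
    have hYk := hY k (by omega)
    nlinarith
  have hm53 : m ≤ 5 * c / 3 := by
    rcases le_total ((3 * c + m) / 2) m with h | h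
    · rw [hMM, max_eq_left h] at hk2; linarith
    · rw [hMM, max_eq_right h] at hk2; linarith
  -- final case analysis
  intro j hj
  rcases eq_or_ne j 0 with rfl | hj0
  · linarith
  rcases eq_or_ne j 1 with rfl | hj1
  · linarith
  rcases eq_or_ne j (M + 4) with rfl | hj4
  · linarith
  rcases eq_or_ne j (M + 5) with rfl | hj5
  · linarith
  have := hkmax' j (by omega) (by omega)
  linarith


lemma sum_ite_coe {n : ℕ} (k : ℕ) (hk : k < n) (f : Fin n → ℝ) :
    ∑ j : Fin n, (if (j : ℕ) = k then f j else 0) = f ⟨k, hk⟩ := by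
  rw [Finset.sum_congr rfl (g := fun j => if j = (⟨k, hk⟩ : Fin n) then f j else 0)
    (fun j _ => by simp [Fin.ext_iff])]
  simp

lemma row_interior (n : ℕ) (a b c : ℝ) (x : Fin n → ℝ) (i : ℕ) (h1 : 1 ≤ i) (h2 : i + 1 < n) :
    ∑ j : Fin n, (if (j : ℕ) + 1 = i then a else if (j : ℕ) = i then b
      else if (j : ℕ) = i + 1 then c else 0) * x j
    = a * x ⟨i - 1, by omega⟩ + b * x ⟨i, by omega⟩ + c * x ⟨i + 1, h2⟩ := by
  have step : ∀ j : Fin n,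
      (if (j : ℕ) + 1 = i then a else if (j : ℕ) = i then b
        else if (j : ℕ) = i + 1 then c else 0) * x j
      = (if (j : ℕ) = i - 1 then a * x j else 0) + (if (j : ℕ) = i then b * x j else 0)
        + (if (j : ℕ) = i + 1 then c * x j else 0) := by
    intro j
    split_ifs
    all_goals (try (exfalso; omega))
    all_goals ring
  rw [Finset.sum_congr rfl (fun j _ => step j), Finset.sum_add_distrib,
    Finset.sum_add_distrib, sum_ite_coe (i-1) (by omega), sum_ite_coe i (by omega),
    sum_ite_coe (i+1) (by omega)]

lemma row_three (n : ℕ) (a b c : ℝ) (x : Fin n → ℝ) (i₀ i₁ i₂ : ℕ)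
    (h01 : i₀ ≠ i₁) (h02 : i₀ ≠ i₂) (h12 : i₁ ≠ i₂) (h2 : i₂ < n) (h1 : i₁ < n) (h0 : i₀ < n) :
    ∑ j : Fin n, (if (j : ℕ) = i₀ then a else if (j : ℕ) = i₁ then b
      else if (j : ℕ) = i₂ then c else 0) * x j
    = a * x ⟨i₀, h0⟩ + b * x ⟨i₁, h1⟩ + c * x ⟨i₂, h2⟩ := by
  have step : ∀ j : Fin n,
      (if (j : ℕ) = i₀ then a else if (j : ℕ) = i₁ then b
        else if (j : ℕ) = i₂ then c else 0) * x j
      = (if (j : ℕ) = i₀ then a * x j else 0) + (if (j : ℕ) = i₁ then b * x j else 0)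
        + (if (j : ℕ) = i₂ then c * x j else 0) := by
    intro j
    split_ifs
    all_goals (try (exfalso; omega))
    all_goals ring
  rw [Finset.sum_congr rfl (fun j _ => step j), Finset.sum_add_distrib,
    Finset.sum_add_distrib, sum_ite_coe i₀ h0, sum_ite_coe i₁ h1, sum_ite_coe i₂ h2]

set_option maxHeartbeats 1000000 in
/-- **Lemma 4.7.**  Let `N ≥ 5` and let `A ∈ ℝ^{(N+1)×(N+1)}` be the coefficient matrix of
the not-a-knot cubic spline system: row `0` has entries `λ₁, −1, μ₁` in columns `0, 1, 2`;
row `i` (`1 ≤ i ≤ N−1`) has entries `μ_i, 2, λ_i` in columns `i−1, i, i+1`; row `N` has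
entries `λ_{N−1}, −1, μ_{N−1}` in columns `N−2, N−1, N`; all other entries zero, where
`μ_i, λ_i ∈ (0,1)` and `μ_i + λ_i = 1` for `i = 1, …, N−1`.  Then `A` is invertible and
`‖A⁻¹‖_∞ < 18`. -/
theorem stmt7 (N : ℕ) (hN : 5 ≤ N)
    (μ lam : ℕ → ℝ)
    (hμlam : ∀ i, 1 ≤ i → i ≤ N - 1 →
      μ i ∈ Set.Ioo (0 : ℝ) 1 ∧ lam i ∈ Set.Ioo (0 : ℝ) 1 ∧ μ i + lam i = 1)
    (A : Matrix (Fin (N + 1)) (Fin (N + 1)) ℝ)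
    (hA : ∀ i j : Fin (N + 1), A i j =
      if (i : ℕ) = 0 then
        (if (j : ℕ) = 0 then lam 1 else if (j : ℕ) = 1 then -1
         else if (j : ℕ) = 2 then μ 1 else 0)
      else if (i : ℕ) = N then
        (if (j : ℕ) = N - 2 then lam (N - 1) else if (j : ℕ) = N - 1 then -1
         else if (j : ℕ) = N then μ (N - 1) else 0)
      else
        (if (j : ℕ) + 1 = (i : ℕ) then μ (i : ℕ) else if (j : ℕ) = (i : ℕ) then 2
         else if (j : ℕ) = (i : ℕ) + 1 then lam (i : ℕ) else 0)) :
    IsUnit A ∧ rowSumNorm A⁻¹ < 18 := by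
  obtain ⟨M, rfl⟩ : ∃ M, N = M + 5 := ⟨N - 5, by omega⟩
  have hml : ∀ i, 1 ≤ i → i ≤ M + 4 →
      (0 < μ i ∧ μ i < 1) ∧ (0 < lam i ∧ lam i < 1) ∧ μ i + lam i = 1 := by
    intro i h1 h2
    obtain ⟨hμ, hl, hs⟩ := hμlam i h1 (by omega)
    exact ⟨⟨hμ.1, hμ.2⟩, ⟨hl.1, hl.2⟩, hs⟩
  -- the key bound
  have keyB : ∀ (x : Fin (M + 5 + 1) → ℝ) (c : ℝ), 0 ≤ c →
      (∀ i, |A.mulVec x i| ≤ c) → ∀ i, |x i| ≤ 6 * c := by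
    intro x c hc hy
    set y := A.mulVec x with hydef
    have hmv : ∀ i : Fin (M + 5 + 1), y i = ∑ j, A i j * x j := fun i => rfl
    -- row 0
    have hrow0 : y ⟨0, by omega⟩ = lam 1 * x ⟨0, by omega⟩ + (-1) * x ⟨1, by omega⟩
        + μ 1 * x ⟨2, by omega⟩ := by
      rw [hmv, Finset.sum_congr rfl (fun j _ => by
        rw [hA ⟨0, by omega⟩ j, if_pos (show ((⟨0, by omega⟩ : Fin (M + 5 + 1)) : ℕ) = 0 from rfl)])]
      exact row_three _ _ _ _ _ 0 1 2 (by omega) (by omega) (by omega) (by omega) (by omega) (by omega)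
    -- interior rows
    have hrowi : ∀ (i : ℕ) (h1 : 1 ≤ i) (h2 : i ≤ M + 4),
        y ⟨i, by omega⟩ = μ i * x ⟨i - 1, by omega⟩ + 2 * x ⟨i, by omega⟩
          + lam i * x ⟨i + 1, by omega⟩ := by
      intro i h1 h2
      rw [hmv, Finset.sum_congr rfl (fun j _ => by
        rw [hA ⟨i, by omega⟩ j,
          if_neg (show ¬((⟨i, by omega⟩ : Fin (M + 5 + 1)) : ℕ) = 0 by simp; omega),
          if_neg (show ¬((⟨i, by omega⟩ : Fin (M + 5 + 1)) : ℕ) = M + 5 by simp; omega)])]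
      exact row_interior _ _ _ _ _ i h1 (by omega)
    -- row N
    have hrowN : y ⟨M + 5, by omega⟩ = lam (M + 4) * x ⟨M + 3, by omega⟩
        + (-1) * x ⟨M + 4, by omega⟩ + μ (M + 4) * x ⟨M + 5, by omega⟩ := by
      rw [hmv, Finset.sum_congr rfl (fun j _ => by
        rw [hA ⟨M + 5, by omega⟩ j,
          if_neg (show ¬((⟨M + 5, by omega⟩ : Fin (M + 5 + 1)) : ℕ) = 0 by simp),
          if_pos (show ((⟨M + 5, by omega⟩ : Fin (M + 5 + 1)) : ℕ) = M + 5 from rfl)])]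
      have := row_three (M + 5 + 1) (lam (M + 5 - 1)) (-1) (μ (M + 5 - 1)) x
        (M + 5 - 2) (M + 5 - 1) (M + 5) (by omega) (by omega) (by omega) (by omega)
        (by omega) (by omega)
      simpa using this
    -- transfer to ℕ-indexed sequences
    set X : ℕ → ℝ := fun n => if h : n < M + 5 + 1 then x ⟨n, h⟩ else 0 with hXdef
    set Y : ℕ → ℝ := fun n => if h : n < M + 5 + 1 then y ⟨n, h⟩ else 0 with hYdef
    have hX : ∀ (n : ℕ) (h : n < M + 5 + 1), X n = x ⟨n, h⟩ := fun n h => dif_pos h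
    have hYe : ∀ (n : ℕ) (h : n < M + 5 + 1), Y n = y ⟨n, h⟩ := fun n h => dif_pos h
    have hbound := auxBound M μ lam hml X Y c hc
      (by rw [hX 0 (by omega), hX 1 (by omega), hX 2 (by omega), hYe 0 (by omega), hrow0]; ring)
      (by
        intro i h1 h2
        rw [hX (i - 1) (by omega), hX i (by omega), hX (i + 1) (by omega),
          hYe i (by omega), hrowi i h1 h2])
      (by rw [hX (M + 3) (by omega), hX (M + 4) (by omega), hX (M + 5) (by omega),
        hYe (M + 5) (by omega), hrowN]; ring)
      (by intro i hi; rw [hYe i (by omega)]; exact hy _)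
    intro i
    have := hbound (i : ℕ) (by omega)
    rwa [hX (i : ℕ) i.isLt, Fin.eta] at this
  -- injectivity and invertibility
  have hinj : Function.Injective A.mulVec := by
    intro u v huv
    have h0 : A.mulVec (u - v) = 0 := by
      rw [Matrix.mulVec_sub, huv, sub_self]
    have := keyB (u - v) 0 le_rfl (fun i => by rw [h0]; simp)
    funext i
    have hi := this i
    simp only [mul_zero] at hi
    have : |u i - v i| ≤ 0 := by simpa using hi
    have := abs_nonneg (u i - v i)
    have : u i - v i = 0 := by
      have := abs_eq_zero.mp (le_antisymm ‹|u i - v i| ≤ 0› (abs_nonneg _))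
      exact this
    linarith [this]
  have hUnit : IsUnit A := Matrix.mulVec_injective_iff_isUnit.mp hinj
  refine ⟨hUnit, ?_⟩
  have hd : IsUnit A.det := (Matrix.isUnit_iff_isUnit_det A).mp hUnit
  have hrow : ∀ i : Fin (M + 5 + 1), ∑ j, |A⁻¹ i j| ≤ 6 := by
    intro i
    set s : Fin (M + 5 + 1) → ℝ := fun j => if 0 ≤ A⁻¹ i j then 1 else -1 with hsdef
    have hs : ∀ j, |A.mulVec (A⁻¹.mulVec s) j| ≤ 1 := by
      intro j
      rw [Matrix.mulVec_mulVec, Matrix.mul_nonsing_inv _ hd, Matrix.one_mulVec]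
      by_cases h : 0 ≤ A⁻¹ i j <;> simp [hsdef, h]
    have hb := keyB (A⁻¹.mulVec s) 1 zero_le_one hs i
    have hsum : (A⁻¹.mulVec s) i = ∑ j, |A⁻¹ i j| := by
      show ∑ j, A⁻¹ i j * s j = ∑ j, |A⁻¹ i j|
      refine Finset.sum_congr rfl (fun j _ => ?_)
      by_cases h : 0 ≤ A⁻¹ i j
      · rw [hsdef]; simp only [if_pos h]; rw [abs_of_nonneg h]; ring
      · rw [hsdef]; simp only [if_neg h]; rw [abs_of_neg (lt_of_not_ge h)]; ring
    rw [hsum] at hb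
    have h6 := le_trans (le_abs_self _) hb
    linarith
  have hsup : rowSumNorm A⁻¹ ≤ 6 := ciSup_le hrow
  exact lt_of_le_of_lt hsup (by norm_num)
end

section
/- Let N ≥ 5 and let A ∈ ℝ^{(N+1)×(N+1)} be the matrix with rows indexed by 0,…,N given by: row 0 has entries λ₁, −1, μ₁ in columns 0, 1, 2; row i for 1 ≤ i ≤ N−1 has entries μ_i, 2, λ_i in columns i−1, i, i+1; row N has entries λ_{N−1}, −1, μ_{N−1} in columns N−2, N−1, N; all other entries are zero, where μ_i, λ_i ∈ (0,1) and μ_i + λ_i = 1 for every i = 1,…,N−1. Then ‖A‖_∞ = 3 and cond_∞(A) := ‖A‖_∞ ‖A⁻¹‖_∞ < 54. -/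
lemma abs3 (p q r u : ℝ) (h : p + q + r = u) : |q| ≤ |u| + |p| + |r| := by
  have hq : q = u - p - r := by linarith
  calc |q| = |u - p - r| := by rw [hq]
    _ ≤ |u - p| + |r| := by simpa [sub_eq_add_neg] using abs_add_le (u - p) (-r)
    _ ≤ (|u| + |p|) + |r| := by
        have := abs_add_le u (-p); simp [sub_eq_add_neg] at this ⊢; linarith

lemma triSum {n : ℕ} (f : Fin n → ℝ) (a b c : Fin n) (hab : a ≠ b) (hac : a ≠ c)
    (hbc : b ≠ c) (h0 : ∀ j, j ≠ a → j ≠ b → j ≠ c → f j = 0) :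
    ∑ j, f j = f a + f b + f c := by
  have h : ∑ j, f j = ∑ j ∈ ({a, b, c} : Finset (Fin n)), f j := by
    refine (Finset.sum_subset (Finset.subset_univ _) ?_).symm
    intro j _ hj
    simp only [Finset.mem_insert, Finset.mem_singleton, not_or] at hj
    exact h0 j hj.1 hj.2.1 hj.2.2
  rw [h, Finset.sum_insert (by simp [hab, hac]), Finset.sum_insert (by simp [hbc]),
    Finset.sum_singleton, add_assoc]

section rows
variable {N : ℕ} (hN : 5 ≤ N) (μ lam : ℕ → ℝ)
  (A : Matrix (Fin (N + 1)) (Fin (N + 1)) ℝ)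
  (hA : ∀ i j : Fin (N + 1), A i j =
      if (i : ℕ) = 0 then
        (if (j : ℕ) = 0 then lam 1 else if (j : ℕ) = 1 then -1
         else if (j : ℕ) = 2 then μ 1 else 0)
      else if (i : ℕ) = N then
        (if (j : ℕ) = N - 2 then lam (N - 1) else if (j : ℕ) = N - 1 then -1
         else if (j : ℕ) = N then μ (N - 1) else 0)
      else
        (if (j : ℕ) + 1 = (i : ℕ) then μ (i : ℕ) else if (j : ℕ) = (i : ℕ) then 2
         else if (j : ℕ) = (i : ℕ) + 1 then lam (i : ℕ) else 0))
  (x : Fin (N + 1) → ℝ)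

include hN hA

lemma row0_eq : A.mulVec x ⟨0, by omega⟩ =
    lam 1 * x ⟨0, by omega⟩ + (-1) * x ⟨1, by omega⟩ + μ 1 * x ⟨2, by omega⟩ := by
  have e1 : A ⟨0, by omega⟩ ⟨0, by omega⟩ = lam 1 := by rw [hA]; simp
  have e2 : A ⟨0, by omega⟩ ⟨1, by omega⟩ = -1 := by rw [hA]; simp
  have e3 : A ⟨0, by omega⟩ ⟨2, by omega⟩ = μ 1 := by rw [hA]; simp
  have hz : ∀ j : Fin (N + 1), j ≠ ⟨0, by omega⟩ → j ≠ ⟨1, by omega⟩ → j ≠ ⟨2, by omega⟩ →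
      A ⟨0, by omega⟩ j * x j = 0 := by
    intro j hj0 hj1 hj2
    simp only [ne_eq, Fin.ext_iff] at hj0 hj1 hj2
    rw [hA]
    simp only [Fin.val_mk]
    rw [if_pos trivial, if_neg hj0, if_neg hj1, if_neg hj2, zero_mul]
  have h := triSum (fun j => A ⟨0, by omega⟩ j * x j) ⟨0, by omega⟩ ⟨1, by omega⟩ ⟨2, by omega⟩
    (by simp [Fin.ext_iff]) (by simp [Fin.ext_iff]) (by simp [Fin.ext_iff]) hz
  simp only [Matrix.mulVec, dotProduct] at *
  rw [h, e1, e2, e3]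

lemma rowI_eq (k : ℕ) (hk1 : 1 ≤ k) (hk2 : k ≤ N - 1) :
    A.mulVec x ⟨k, by omega⟩ =
    μ k * x ⟨k - 1, by omega⟩ + 2 * x ⟨k, by omega⟩ + lam k * x ⟨k + 1, by omega⟩ := by
  have e1 : A ⟨k, by omega⟩ ⟨k - 1, by omega⟩ = μ k := by
    rw [hA]; simp only [Fin.val_mk]
    rw [if_neg (by omega), if_neg (by omega), if_pos (by omega)]
  have e2 : A ⟨k, by omega⟩ ⟨k, by omega⟩ = 2 := by
    rw [hA]; simp only [Fin.val_mk]
    rw [if_neg (by omega), if_neg (by omega), if_neg (by omega), if_pos trivial]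
  have e3 : A ⟨k, by omega⟩ ⟨k + 1, by omega⟩ = lam k := by
    rw [hA]; simp only [Fin.val_mk]
    rw [if_neg (by omega), if_neg (by omega), if_neg (by omega), if_neg (by omega),
      if_pos trivial]
  have hz : ∀ j : Fin (N + 1), j ≠ ⟨k - 1, by omega⟩ → j ≠ ⟨k, by omega⟩ →
      j ≠ ⟨k + 1, by omega⟩ → A ⟨k, by omega⟩ j * x j = 0 := by
    intro j hj0 hj1 hj2
    simp only [ne_eq, Fin.ext_iff, Fin.val_mk] at hj0 hj1 hj2
    rw [hA]
    simp only [Fin.val_mk]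
    rw [if_neg (by omega), if_neg (by omega), if_neg (by omega), if_neg (by omega),
      if_neg (by omega), zero_mul]
  have h := triSum (fun j => A ⟨k, by omega⟩ j * x j)
    ⟨k - 1, by omega⟩ ⟨k, by omega⟩ ⟨k + 1, by omega⟩
    (by simp only [ne_eq, Fin.ext_iff, Fin.val_mk]; omega)
    (by simp only [ne_eq, Fin.ext_iff, Fin.val_mk]; omega)
    (by simp only [ne_eq, Fin.ext_iff, Fin.val_mk]; omega) hz
  simp only [Matrix.mulVec, dotProduct] at *
  rw [h, e1, e2, e3]

lemma rowN_eq : A.mulVec x ⟨N, by omega⟩ =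
    lam (N - 1) * x ⟨N - 2, by omega⟩ + (-1) * x ⟨N - 1, by omega⟩ +
      μ (N - 1) * x ⟨N, by omega⟩ := by
  have e1 : A ⟨N, by omega⟩ ⟨N - 2, by omega⟩ = lam (N - 1) := by
    rw [hA]; simp only [Fin.val_mk]
    rw [if_neg (by omega), if_pos trivial, if_pos trivial]
  have e2 : A ⟨N, by omega⟩ ⟨N - 1, by omega⟩ = -1 := by
    rw [hA]; simp only [Fin.val_mk]
    rw [if_neg (by omega), if_pos trivial, if_neg (by omega), if_pos trivial]
  have e3 : A ⟨N, by omega⟩ ⟨N, by omega⟩ = μ (N - 1) := by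
    rw [hA]; simp only [Fin.val_mk]
    rw [if_neg (by omega), if_pos trivial, if_neg (by omega), if_neg (by omega),
      if_pos trivial]
  have hz : ∀ j : Fin (N + 1), j ≠ ⟨N - 2, by omega⟩ → j ≠ ⟨N - 1, by omega⟩ →
      j ≠ ⟨N, by omega⟩ → A ⟨N, by omega⟩ j * x j = 0 := by
    intro j hj0 hj1 hj2
    simp only [ne_eq, Fin.ext_iff, Fin.val_mk] at hj0 hj1 hj2
    rw [hA]
    simp only [Fin.val_mk]
    rw [if_neg (by omega), if_pos trivial, if_neg hj0, if_neg hj1, if_neg hj2, zero_mul]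
  have h := triSum (fun j => A ⟨N, by omega⟩ j * x j)
    ⟨N - 2, by omega⟩ ⟨N - 1, by omega⟩ ⟨N, by omega⟩
    (by simp only [ne_eq, Fin.ext_iff, Fin.val_mk]; omega)
    (by simp only [ne_eq, Fin.ext_iff, Fin.val_mk]; omega)
    (by simp only [ne_eq, Fin.ext_iff, Fin.val_mk]; omega) hz
  simp only [Matrix.mulVec, dotProduct] at *
  rw [h, e1, e2, e3]



lemma rowSum0 : ∑ j, |A (⟨0, by omega⟩ : Fin (N+1)) j| = |lam 1| + 1 + |μ 1| := by
  have e1 : A ⟨0, by omega⟩ ⟨0, by omega⟩ = lam 1 := by rw [hA]; simp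
  have e2 : A ⟨0, by omega⟩ ⟨1, by omega⟩ = -1 := by rw [hA]; simp
  have e3 : A ⟨0, by omega⟩ ⟨2, by omega⟩ = μ 1 := by rw [hA]; simp
  have hz : ∀ j : Fin (N + 1), j ≠ ⟨0, by omega⟩ → j ≠ ⟨1, by omega⟩ → j ≠ ⟨2, by omega⟩ →
      |A ⟨0, by omega⟩ j| = 0 := by
    intro j hj0 hj1 hj2
    simp only [ne_eq, Fin.ext_iff] at hj0 hj1 hj2
    rw [hA]
    simp only [Fin.val_mk]
    rw [if_pos trivial, if_neg hj0, if_neg hj1, if_neg hj2, abs_zero]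
  have h := triSum (fun j => |A ⟨0, by omega⟩ j|) ⟨0, by omega⟩ ⟨1, by omega⟩ ⟨2, by omega⟩
    (by simp [Fin.ext_iff]) (by simp [Fin.ext_iff]) (by simp [Fin.ext_iff]) hz
  rw [h]
  rw [e1, e2, e3]
  norm_num

lemma rowSumI (k : ℕ) (hk1 : 1 ≤ k) (hk2 : k ≤ N - 1) :
    ∑ j, |A (⟨k, by omega⟩ : Fin (N+1)) j| = |μ k| + 2 + |lam k| := by
  have e1 : A ⟨k, by omega⟩ ⟨k - 1, by omega⟩ = μ k := by
    rw [hA]; simp only [Fin.val_mk]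
    rw [if_neg (by omega), if_neg (by omega), if_pos (by omega)]
  have e2 : A ⟨k, by omega⟩ ⟨k, by omega⟩ = 2 := by
    rw [hA]; simp only [Fin.val_mk]
    rw [if_neg (by omega), if_neg (by omega), if_neg (by omega), if_pos trivial]
  have e3 : A ⟨k, by omega⟩ ⟨k + 1, by omega⟩ = lam k := by
    rw [hA]; simp only [Fin.val_mk]
    rw [if_neg (by omega), if_neg (by omega), if_neg (by omega), if_neg (by omega),
      if_pos trivial]
  have hz : ∀ j : Fin (N + 1), j ≠ ⟨k - 1, by omega⟩ → j ≠ ⟨k, by omega⟩ →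
      j ≠ ⟨k + 1, by omega⟩ → |A ⟨k, by omega⟩ j| = 0 := by
    intro j hj0 hj1 hj2
    simp only [ne_eq, Fin.ext_iff, Fin.val_mk] at hj0 hj1 hj2
    rw [hA]
    simp only [Fin.val_mk]
    rw [if_neg (by omega), if_neg (by omega), if_neg (by omega), if_neg (by omega),
      if_neg (by omega), abs_zero]
  have h := triSum (fun j => |A ⟨k, by omega⟩ j|)
    ⟨k - 1, by omega⟩ ⟨k, by omega⟩ ⟨k + 1, by omega⟩
    (by simp only [ne_eq, Fin.ext_iff, Fin.val_mk]; omega)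
    (by simp only [ne_eq, Fin.ext_iff, Fin.val_mk]; omega)
    (by simp only [ne_eq, Fin.ext_iff, Fin.val_mk]; omega) hz
  rw [h]
  rw [e1, e2, e3]
  norm_num

lemma rowSumN : ∑ j, |A (⟨N, by omega⟩ : Fin (N+1)) j| = |lam (N-1)| + 1 + |μ (N-1)| := by
  have e1 : A ⟨N, by omega⟩ ⟨N - 2, by omega⟩ = lam (N - 1) := by
    rw [hA]; simp only [Fin.val_mk]
    rw [if_neg (by omega), if_pos trivial, if_pos trivial]
  have e2 : A ⟨N, by omega⟩ ⟨N - 1, by omega⟩ = -1 := by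
    rw [hA]; simp only [Fin.val_mk]
    rw [if_neg (by omega), if_pos trivial, if_neg (by omega), if_pos trivial]
  have e3 : A ⟨N, by omega⟩ ⟨N, by omega⟩ = μ (N - 1) := by
    rw [hA]; simp only [Fin.val_mk]
    rw [if_neg (by omega), if_pos trivial, if_neg (by omega), if_neg (by omega),
      if_pos trivial]
  have hz : ∀ j : Fin (N + 1), j ≠ ⟨N - 2, by omega⟩ → j ≠ ⟨N - 1, by omega⟩ →
      j ≠ ⟨N, by omega⟩ → |A ⟨N, by omega⟩ j| = 0 := by
    intro j hj0 hj1 hj2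
    simp only [ne_eq, Fin.ext_iff, Fin.val_mk] at hj0 hj1 hj2
    rw [hA]
    simp only [Fin.val_mk]
    rw [if_neg (by omega), if_pos trivial, if_neg hj0, if_neg hj1, if_neg hj2, abs_zero]
  have h := triSum (fun j => |A ⟨N, by omega⟩ j|)
    ⟨N - 2, by omega⟩ ⟨N - 1, by omega⟩ ⟨N, by omega⟩
    (by simp only [ne_eq, Fin.ext_iff, Fin.val_mk]; omega)
    (by simp only [ne_eq, Fin.ext_iff, Fin.val_mk]; omega)
    (by simp only [ne_eq, Fin.ext_iff, Fin.val_mk]; omega) hz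
  rw [h]
  rw [e1, e2, e3]
  norm_num


variable (hμlam : ∀ i, 1 ≤ i → i ≤ N - 1 →
      μ i ∈ Set.Ioo (0 : ℝ) 1 ∧ lam i ∈ Set.Ioo (0 : ℝ) 1 ∧ μ i + lam i = 1)

include hμlam

set_option maxHeartbeats 1000000 in
lemma key_est (s : ℝ) (hs : ∀ k, |A.mulVec x k| ≤ s) : ∀ i, |x i| ≤ 9 * s := by
  -- abbreviations
  set X : ℕ → ℝ := fun k => if h : k ≤ N then x ⟨k, by omega⟩ else 0 with hX
  set Y : ℕ → ℝ := fun k => if h : k ≤ N then A.mulVec x ⟨k, by omega⟩ else 0 with hY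
  have hXe : ∀ k (h : k ≤ N), X k = x ⟨k, by omega⟩ := fun k h => dif_pos h
  have hYs : ∀ k, |Y k| ≤ s := by
    intro k
    by_cases h : k ≤ N
    · rw [hY]; simp only [dif_pos h]; exact hs _
    · rw [hY]; simp only [dif_neg h, abs_zero]
      exact le_trans (abs_nonneg _) (hs ⟨0, by omega⟩)
  have hs0 : 0 ≤ s := le_trans (abs_nonneg _) (hs ⟨0, by omega⟩)
  -- row equations in terms of X, Y
  have e0 : lam 1 * X 0 + (-1) * X 1 + μ 1 * X 2 = Y 0 := by
    rw [hXe 0 (by omega), hXe 1 (by omega), hXe 2 (by omega), hY]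
    simp only [dif_pos (show (0:ℕ) ≤ N by omega)]
    exact (row0_eq hN μ lam A hA x).symm
  have eI : ∀ k, 1 ≤ k → k ≤ N - 1 →
      μ k * X (k - 1) + 2 * X k + lam k * X (k + 1) = Y k := by
    intro k h1 h2
    rw [hXe (k-1) (by omega), hXe k (by omega), hXe (k+1) (by omega), hY]
    simp only [dif_pos (show k ≤ N by omega)]
    exact (rowI_eq hN μ lam A hA x k h1 h2).symm
  have eN : lam (N-1) * X (N-2) + (-1) * X (N-1) + μ (N-1) * X N = Y N := by
    rw [hXe (N-2) (by omega), hXe (N-1) (by omega), hXe N (by omega), hY]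
    simp only [dif_pos (show N ≤ N by omega)]
    exact (rowN_eq hN μ lam A hA x).symm
  -- interior maximum
  have hTne : (Finset.Icc 1 (N-1)).Nonempty := ⟨1, Finset.mem_Icc.mpr (by omega)⟩
  set M : ℝ := (Finset.Icc 1 (N-1)).sup' hTne (fun k => |X k|) with hMdef
  have hMle : ∀ k, 1 ≤ k → k ≤ N - 1 → |X k| ≤ M := by
    intro k h1 h2
    exact Finset.le_sup' (fun k => |X k|) (Finset.mem_Icc.mpr ⟨h1, h2⟩)
  have hM0 : 0 ≤ M := le_trans (abs_nonneg _) (hMle 1 le_rfl (by omega))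
  -- generic interior row estimate
  have hrow : ∀ k, 1 ≤ k → k ≤ N - 1 → ∀ m, 0 ≤ m → |X (k-1)| ≤ m → |X (k+1)| ≤ m →
      2 * |X k| ≤ s + m := by
    intro k h1 h2 m hm ha hc
    obtain ⟨⟨hμ0, hμ1⟩, ⟨hl0, hl1⟩, hsum⟩ := hμlam k h1 h2
    have h3 := abs3 (μ k * X (k-1)) (2 * X k) (lam k * X (k+1)) (Y k) (eI k h1 h2)
    rw [abs_mul, abs_mul, abs_mul, abs_two, abs_of_pos hμ0, abs_of_pos hl0] at h3
    have t1 : μ k * |X (k-1)| ≤ μ k * m := mul_le_mul_of_nonneg_left ha hμ0.le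
    have t2 : lam k * |X (k+1)| ≤ lam k * m := mul_le_mul_of_nonneg_left hc hl0.le
    have := hYs k
    nlinarith
  -- M ≤ 3 s
  obtain ⟨i₀, hi₀mem, hi₀⟩ := Finset.exists_mem_eq_sup' hTne (fun k => |X k|)
  rw [← hMdef] at hi₀
  simp only [Finset.mem_Icc] at hi₀mem
  obtain ⟨hi1, hi2⟩ := hi₀mem
  have hM3 : M ≤ 3 * s := by
    rcases eq_or_ne i₀ 1 with h1 | h1
    · -- i₀ = 1
      obtain ⟨⟨hμ0, hμ1⟩, ⟨hl0, hl1⟩, hsum⟩ := hμlam 1 le_rfl (by omega)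
      have hId : (1 + lam 1) * X 1 = (μ 1 - lam 1) * X 2 - μ 1 * Y 0 + lam 1 * Y 1 := by
        have h0' := e0
        have h1' := eI 1 le_rfl (by omega)
        norm_num at h1'
        linear_combination (-(μ 1)) * h0' + lam 1 * h1' -
          (X 1 + (lam 1 - μ 1) * X 2) * hsum
      have hX2 : 2 * |X 2| ≤ s + M := by
        refine hrow 2 (by omega) (by omega) M hM0 ?_ ?_
        · exact hMle 1 le_rfl (by omega)
        · exact hMle 3 (by omega) (by omega)
      have habs : (1 + lam 1) * |X 1| ≤ |μ 1 - lam 1| * |X 2| + s := by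
        have h4 : |(1 + lam 1) * X 1| ≤ |(μ 1 - lam 1) * X 2| + |μ 1 * Y 0| + |lam 1 * Y 1| := by
          rw [hId]
          calc |(μ 1 - lam 1) * X 2 - μ 1 * Y 0 + lam 1 * Y 1|
              ≤ |(μ 1 - lam 1) * X 2 - μ 1 * Y 0| + |lam 1 * Y 1| := abs_add_le _ _
            _ ≤ (|(μ 1 - lam 1) * X 2| + |μ 1 * Y 0|) + |lam 1 * Y 1| := by
                have := abs_add_le ((μ 1 - lam 1) * X 2) (-(μ 1 * Y 0))
                simp only [abs_neg, ← sub_eq_add_neg] at this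
                linarith
        rw [abs_mul (1 + lam 1), abs_of_pos (by linarith : (0:ℝ) < 1 + lam 1),
          abs_mul (μ 1), abs_mul (lam 1), abs_of_pos hμ0, abs_of_pos hl0,
          abs_mul (μ 1 - lam 1)] at h4
        have t1 : μ 1 * |Y 0| ≤ μ 1 * s := mul_le_mul_of_nonneg_left (hYs 0) hμ0.le
        have t2 : lam 1 * |Y 1| ≤ lam 1 * s := mul_le_mul_of_nonneg_left (hYs 1) hl0.le
        nlinarith
      have hd : |μ 1 - lam 1| ≤ 1 := by rw [abs_le]; constructor <;> linarith
      have hM1 : M = |X 1| := by rw [hi₀, h1]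
      have h5 : |μ 1 - lam 1| * |X 2| ≤ |X 2| := by
        nlinarith [abs_nonneg (X 2)]
      nlinarith [hX2, habs, hM1 ▸ (le_refl M), mul_nonneg hl0.le hM0]
    · rcases eq_or_ne i₀ (N-1) with h2 | h2
      · -- i₀ = N - 1
        obtain ⟨⟨hμ0, hμ1⟩, ⟨hl0, hl1⟩, hsum⟩ := hμlam (N-1) (by omega) le_rfl
        have hId : (1 + μ (N-1)) * X (N-1) =
            (lam (N-1) - μ (N-1)) * X (N-2) - lam (N-1) * Y N + μ (N-1) * Y (N-1) := by
          have h0' := eN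
          have h1' := eI (N-1) (by omega) le_rfl
          have hee : (N-1) - 1 = N - 2 := by omega
          have hee2 : (N-1) + 1 = N := by omega
          rw [hee, hee2] at h1'
          linear_combination (-(lam (N-1))) * h0' + μ (N-1) * h1' -
            (X (N-1) + (μ (N-1) - lam (N-1)) * X (N-2)) * hsum
        have hX2 : 2 * |X (N-2)| ≤ s + M := by
          have hh := hrow (N-2) (by omega) (by omega) M hM0 ?_ ?_
          · exact hh
          · have : N - 2 - 1 = N - 3 := by omega
            rw [this]; exact hMle (N-3) (by omega) (by omega)
          · have : N - 2 + 1 = N - 1 := by omega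
            rw [this]; exact hMle (N-1) (by omega) le_rfl
        have habs : (1 + μ (N-1)) * |X (N-1)| ≤ |lam (N-1) - μ (N-1)| * |X (N-2)| + s := by
          have h4 : |(1 + μ (N-1)) * X (N-1)| ≤
              |(lam (N-1) - μ (N-1)) * X (N-2)| + |lam (N-1) * Y N| + |μ (N-1) * Y (N-1)| := by
            rw [hId]
            calc |(lam (N-1) - μ (N-1)) * X (N-2) - lam (N-1) * Y N + μ (N-1) * Y (N-1)|
                ≤ |(lam (N-1) - μ (N-1)) * X (N-2) - lam (N-1) * Y N| + |μ (N-1) * Y (N-1)| :=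
                  abs_add_le _ _
              _ ≤ (|(lam (N-1) - μ (N-1)) * X (N-2)| + |lam (N-1) * Y N|) + |μ (N-1) * Y (N-1)| := by
                  have := abs_add_le ((lam (N-1) - μ (N-1)) * X (N-2)) (-(lam (N-1) * Y N))
                  simp only [abs_neg, ← sub_eq_add_neg] at this
                  linarith
          rw [abs_mul (1 + μ (N-1)), abs_of_pos (by linarith : (0:ℝ) < 1 + μ (N-1)),
            abs_mul (lam (N-1)), abs_mul (μ (N-1)), abs_of_pos hμ0, abs_of_pos hl0,
            abs_mul (lam (N-1) - μ (N-1))] at h4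
          have t1 : lam (N-1) * |Y N| ≤ lam (N-1) * s := mul_le_mul_of_nonneg_left (hYs N) hl0.le
          have t2 : μ (N-1) * |Y (N-1)| ≤ μ (N-1) * s := mul_le_mul_of_nonneg_left (hYs (N-1)) hμ0.le
          nlinarith
        have hd : |lam (N-1) - μ (N-1)| ≤ 1 := by rw [abs_le]; constructor <;> linarith
        have hM1 : M = |X (N-1)| := by rw [hi₀, h2]
        have h5 : |lam (N-1) - μ (N-1)| * |X (N-2)| ≤ |X (N-2)| := by
          nlinarith [abs_nonneg (X (N-2))]
        nlinarith [hX2, habs, mul_nonneg hμ0.le hM0]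
      · -- 2 ≤ i₀ ≤ N-2
        have hh := hrow i₀ hi1 hi2 M hM0 (hMle (i₀ - 1) (by omega) (by omega))
          (hMle (i₀ + 1) (by omega) (by omega))
        rw [← hi₀] at hh
        linarith
  -- boundary bounds
  obtain ⟨⟨hμ0, hμ1⟩, ⟨hl0, hl1⟩, hsum⟩ := hμlam 1 le_rfl (by omega)
  obtain ⟨⟨hμ0', hμ1'⟩, ⟨hl0', hl1'⟩, hsum'⟩ := hμlam (N-1) (by omega) le_rfl
  have hB0 : (1 + lam 1) * X 0 + (1 + μ 1) * X 2 = 2 * Y 0 + Y 1 := by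
    have h1' := eI 1 le_rfl (by omega)
    norm_num at h1'
    linear_combination 2 * e0 + h1' - (X 0 + X 2) * hsum
  have hBN : (1 + lam (N-1)) * X (N-2) + (1 + μ (N-1)) * X N = 2 * Y N + Y (N-1) := by
    have h1' := eI (N-1) (by omega) le_rfl
    have hee : (N-1) - 1 = N - 2 := by omega
    have hee2 : (N-1) + 1 = N := by omega
    rw [hee, hee2] at h1'
    linear_combination 2 * eN + h1' - (X (N-2) + X N) * hsum'
  have hX0 : |X 0| ≤ 9 * s := by
    have h4 : |(1 + lam 1) * X 0| ≤ 2 * |Y 0| + |Y 1| + |(1 + μ 1) * X 2| := by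
      have : (1 + lam 1) * X 0 = 2 * Y 0 + Y 1 - (1 + μ 1) * X 2 := by linarith
      rw [this]
      calc |2 * Y 0 + Y 1 - (1 + μ 1) * X 2|
          ≤ |2 * Y 0 + Y 1| + |(1 + μ 1) * X 2| := by
            have := abs_add_le (2 * Y 0 + Y 1) (-((1 + μ 1) * X 2))
            simp only [abs_neg, ← sub_eq_add_neg] at this; linarith
        _ ≤ (|2 * Y 0| + |Y 1|) + |(1 + μ 1) * X 2| := by
            linarith [abs_add_le (2 * Y 0) (Y 1)]
        _ = 2 * |Y 0| + |Y 1| + |(1 + μ 1) * X 2| := by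
            rw [abs_mul, abs_two]
    rw [abs_mul (1 + lam 1), abs_of_pos (by linarith : (0:ℝ) < 1 + lam 1),
      abs_mul (1 + μ 1), abs_of_pos (by linarith : (0:ℝ) < 1 + μ 1)] at h4
    have hx2 : |X 2| ≤ M := hMle 2 (by omega) (by omega)
    have hy0 := hYs 0
    have hy1 := hYs 1
    nlinarith [abs_nonneg (X 0), mul_nonneg hl0.le (abs_nonneg (X 0))]
  have hXN : |X N| ≤ 9 * s := by
    have h4 : |(1 + μ (N-1)) * X N| ≤ 2 * |Y N| + |Y (N-1)| + |(1 + lam (N-1)) * X (N-2)| := by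
      have : (1 + μ (N-1)) * X N = 2 * Y N + Y (N-1) - (1 + lam (N-1)) * X (N-2) := by linarith
      rw [this]
      calc |2 * Y N + Y (N-1) - (1 + lam (N-1)) * X (N-2)|
          ≤ |2 * Y N + Y (N-1)| + |(1 + lam (N-1)) * X (N-2)| := by
            have := abs_add_le (2 * Y N + Y (N-1)) (-((1 + lam (N-1)) * X (N-2)))
            simp only [abs_neg, ← sub_eq_add_neg] at this; linarith
        _ ≤ (|2 * Y N| + |Y (N-1)|) + |(1 + lam (N-1)) * X (N-2)| := by
            linarith [abs_add_le (2 * Y N) (Y (N-1))]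
        _ = 2 * |Y N| + |Y (N-1)| + |(1 + lam (N-1)) * X (N-2)| := by
            rw [abs_mul, abs_two]
    rw [abs_mul (1 + μ (N-1)), abs_of_pos (by linarith : (0:ℝ) < 1 + μ (N-1)),
      abs_mul (1 + lam (N-1)), abs_of_pos (by linarith : (0:ℝ) < 1 + lam (N-1))] at h4
    have hx2 : |X (N-2)| ≤ M := hMle (N-2) (by omega) (by omega)
    have hyN := hYs N
    have hy1 := hYs (N-1)
    nlinarith [abs_nonneg (X N), mul_nonneg hμ0'.le (abs_nonneg (X N))]
  -- conclude
  intro i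
  have hix : x i = X (i : ℕ) := by
    rw [hXe (i : ℕ) (by omega)]
  rcases eq_or_ne (i : ℕ) 0 with h | h
  · rw [hix, h]; exact hX0
  · rcases eq_or_ne (i : ℕ) N with h' | h'
    · rw [hix, h']; exact hXN
    · rw [hix]
      have : |X (i : ℕ)| ≤ M := hMle (i : ℕ) (by omega) (by omega)
      linarith

end rows

/-- **Theorem 4.8 (conditioning of the not-a-knot cubic spline system).**
Let `N ≥ 5` and let `A ∈ ℝ^{(N+1)×(N+1)}` be the coefficient matrix of the not-a-knot
cubic spline system: row `0` has entries `λ₁, −1, μ₁` in columns `0, 1, 2`; row `i`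
(`1 ≤ i ≤ N−1`) has entries `μ_i, 2, λ_i` in columns `i−1, i, i+1`; row `N` has entries
`λ_{N−1}, −1, μ_{N−1}` in columns `N−2, N−1, N`; all other entries zero, where
`μ_i, λ_i ∈ (0,1)` and `μ_i + λ_i = 1` for `i = 1, …, N−1`.  Then `‖A‖_∞ = 3` and
`cond_∞(A) = ‖A‖_∞ ‖A⁻¹‖_∞ < 54`. -/
theorem stmt8 (N : ℕ) (hN : 5 ≤ N)
    (μ lam : ℕ → ℝ)
    (hμlam : ∀ i, 1 ≤ i → i ≤ N - 1 →
      μ i ∈ Set.Ioo (0 : ℝ) 1 ∧ lam i ∈ Set.Ioo (0 : ℝ) 1 ∧ μ i + lam i = 1)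
    (A : Matrix (Fin (N + 1)) (Fin (N + 1)) ℝ)
    (hA : ∀ i j : Fin (N + 1), A i j =
      if (i : ℕ) = 0 then
        (if (j : ℕ) = 0 then lam 1 else if (j : ℕ) = 1 then -1
         else if (j : ℕ) = 2 then μ 1 else 0)
      else if (i : ℕ) = N then
        (if (j : ℕ) = N - 2 then lam (N - 1) else if (j : ℕ) = N - 1 then -1
         else if (j : ℕ) = N then μ (N - 1) else 0)
      else
        (if (j : ℕ) + 1 = (i : ℕ) then μ (i : ℕ) else if (j : ℕ) = (i : ℕ) then 2
         else if (j : ℕ) = (i : ℕ) + 1 then lam (i : ℕ) else 0)) :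
    rowSumNorm A = 3 ∧ rowSumNorm A * rowSumNorm A⁻¹ < 54 := by
  obtain ⟨⟨hμ0, hμ1'⟩, ⟨hl0, hl1⟩, hsum⟩ := hμlam 1 le_rfl (by omega)
  obtain ⟨⟨hμ0', hμ1''⟩, ⟨hl0', hl1''⟩, hsum'⟩ := hμlam (N-1) (by omega) le_rfl
  have hrs : ∀ i : Fin (N+1), ∑ j, |A i j| ≤ 3 := by
    intro i
    rcases eq_or_ne (i:ℕ) 0 with h|h
    · have hi : i = ⟨0, by omega⟩ := Fin.ext h
      rw [hi, rowSum0 hN μ lam A hA, abs_of_pos hl0, abs_of_pos hμ0]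
      linarith
    · rcases eq_or_ne (i:ℕ) N with h'|h'
      · have hi : i = ⟨N, by omega⟩ := Fin.ext h'
        rw [hi, rowSumN hN μ lam A hA, abs_of_pos hl0', abs_of_pos hμ0']
        linarith
      · have hi : i = ⟨(i:ℕ), i.isLt⟩ := Fin.ext rfl
        obtain ⟨⟨a0, a1⟩, ⟨b0, b1⟩, hsi⟩ := hμlam (i:ℕ) (by omega) (by omega)
        rw [hi, rowSumI hN μ lam A hA (i:ℕ) (by omega) (by omega),
          abs_of_pos a0, abs_of_pos b0]
        linarith
  have hval3 : ∑ j, |A (⟨1, by omega⟩ : Fin (N+1)) j| = 3 := by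
    rw [rowSumI hN μ lam A hA 1 le_rfl (by omega), abs_of_pos hμ0, abs_of_pos hl0]
    linarith
  have hnorm : rowSumNorm A = 3 := by
    unfold rowSumNorm
    apply le_antisymm
    · exact ciSup_le hrs
    · rw [← hval3]
      exact le_ciSup (f := fun i : Fin (N+1) => ∑ j, |A i j|)
        (Set.Finite.bddAbove (Set.finite_range _)) ⟨1, by omega⟩
  refine ⟨hnorm, ?_⟩
  have hdet : A.det ≠ 0 := by
    intro h
    obtain ⟨v, hv0, hv⟩ := (Matrix.exists_mulVec_eq_zero_iff).mpr h
    have hkey := key_est hN μ lam A hA v hμlam 0 (fun k => by rw [hv]; simp)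
    apply hv0
    funext i
    have h1 := hkey i
    have h2 := abs_nonneg (v i)
    have : |v i| = 0 := by linarith
    simpa using this
  have hunit : IsUnit A.det := isUnit_iff_ne_zero.mpr hdet
  have hAAinv : A * A⁻¹ = 1 := Matrix.mul_nonsing_inv A hunit
  have hbound : ∀ i : Fin (N+1), ∑ j, |A⁻¹ i j| ≤ 9 := by
    intro i
    set y : Fin (N+1) → ℝ := fun j => if A⁻¹ i j < 0 then -1 else 1 with hy
    have hy1 : ∀ k, |y k| ≤ 1 := by
      intro k; rw [hy]; dsimp only; split_ifs <;> simp
    have hAx : A.mulVec (A⁻¹.mulVec y) = y := by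
      rw [Matrix.mulVec_mulVec, hAAinv, Matrix.one_mulVec]
    have hk := key_est hN μ lam A hA (A⁻¹.mulVec y) hμlam 1
      (fun k => by rw [hAx]; exact hy1 k)
    have hsum_eq : (A⁻¹.mulVec y) i = ∑ j, |A⁻¹ i j| := by
      simp only [Matrix.mulVec, dotProduct]
      apply Finset.sum_congr rfl
      intro j _
      rw [hy]; dsimp only
      split_ifs with h
      · rw [abs_of_neg h]; ring
      · rw [abs_of_nonneg (not_lt.mp h)]; ring
    have h1 := hk i
    rw [hsum_eq] at h1
    have h2 : ∑ j, |A⁻¹ i j| ≤ 9 * 1 := le_trans (le_abs_self _) h1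
    linarith
  have hinv9 : rowSumNorm A⁻¹ ≤ 9 := by
    unfold rowSumNorm
    exact ciSup_le hbound
  rw [hnorm]
  linarith
end

section
/- Let N ≥ 3, let μ_j, λ_j ∈ (0,1) with μ_j + λ_j = 1 for j = 1,…,N−1, and let A_s ∈ ℝ^{(N−1)×(N−1)} be the tridiagonal matrix with rows indexed by 1,…,N−1 given by: row 1 has entries (2−μ₁)/(1−μ₁) and (1−2μ₁)/(1−μ₁) in columns 1, 2; row j for 2 ≤ j ≤ N−2 has entries μ_j, 2, λ_j in columns j−1, j, j+1; row N−1 has entries (1−2λ_{N−1})/(1−λ_{N−1}) and (2−λ_{N−1})/(1−λ_{N−1}) in columns N−2, N−1; all other entries are zero. Then A_s is strictly diagonally dominant by rows with min_i (|a_{ii}| − Σ_{j≠i} |a_{ij}|) ≥ 1; in particular A_s is invertible and ‖A_s⁻¹‖_∞ ≤ 1. -/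
set_option maxHeartbeats 2000000 in
/-- **The decoupled not-a-knot subsystem is strictly diagonally dominant.**
Let `N ≥ 3` and `μ_j, λ_j ∈ (0,1)` with `μ_j + λ_j = 1` for `j = 1, …, N−1`.  Let
`A_s ∈ ℝ^{(N−1)×(N−1)}` have rows indexed by `1, …, N−1` (here realized by `Fin (N−1)`
with index `i` standing for row `i+1`): row `1` has entries `(2−μ₁)/(1−μ₁)` and
`(1−2μ₁)/(1−μ₁)` in columns `1, 2`; row `j` (`2 ≤ j ≤ N−2`) has entries `μ_j, 2, λ_j` in
columns `j−1, j, j+1`; row `N−1` has entries `(1−2λ_{N−1})/(1−λ_{N−1})` and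
`(2−λ_{N−1})/(1−λ_{N−1})` in columns `N−2, N−1`; all other entries zero.  Then `A_s` is
strictly diagonally dominant by rows with dominance gap at least `1`; in particular `A_s`
is invertible and `‖A_s⁻¹‖_∞ ≤ 1`. -/
theorem stmt11 (N : ℕ) (hN : 3 ≤ N)
    (μ lam : ℕ → ℝ)
    (hμlam : ∀ j, 1 ≤ j → j ≤ N - 1 →
      μ j ∈ Set.Ioo (0 : ℝ) 1 ∧ lam j ∈ Set.Ioo (0 : ℝ) 1 ∧ μ j + lam j = 1)
    (A : Matrix (Fin (N - 1)) (Fin (N - 1)) ℝ)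
    (hA : ∀ i j : Fin (N - 1), A i j =
      if (i : ℕ) + 1 = 1 then
        (if (j : ℕ) + 1 = 1 then (2 - μ 1) / (1 - μ 1)
         else if (j : ℕ) + 1 = 2 then (1 - 2 * μ 1) / (1 - μ 1) else 0)
      else if (i : ℕ) + 1 = N - 1 then
        (if (j : ℕ) + 1 = N - 2 then (1 - 2 * lam (N - 1)) / (1 - lam (N - 1))
         else if (j : ℕ) + 1 = N - 1 then (2 - lam (N - 1)) / (1 - lam (N - 1)) else 0)
      else
        (if (j : ℕ) + 1 + 1 = (i : ℕ) + 1 then μ ((i : ℕ) + 1)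
         else if (j : ℕ) = (i : ℕ) then 2
         else if (j : ℕ) + 1 = (i : ℕ) + 1 + 1 then lam ((i : ℕ) + 1) else 0)) :
    (∀ i, ∑ j ∈ Finset.univ.erase i, |A i j| + 1 ≤ |A i i|) ∧
    IsUnit A ∧ rowSumNorm A⁻¹ ≤ 1 := by
  have hM : 2 ≤ N - 1 := by omega
  have hne : Nonempty (Fin (N - 1)) := ⟨⟨0, by omega⟩⟩
  obtain ⟨⟨hμ0, hμ1⟩, -, -⟩ := hμlam 1 le_rfl (by omega)
  obtain ⟨-, ⟨hl0, hl1⟩, -⟩ := hμlam (N - 1) (by omega) le_rfl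
  -- Strict diagonal dominance with gap ≥ 1
  have hdom : ∀ i : Fin (N - 1), ∑ j ∈ Finset.univ.erase i, |A i j| + 1 ≤ |A i i| := by
    intro i
    rcases eq_or_ne (i : ℕ) 0 with h0 | h0
    · -- first row
      have hdiag : A i i = (2 - μ 1) / (1 - μ 1) := by
        rw [hA, if_pos (show (i : ℕ) + 1 = 1 by omega),
          if_pos (show (i : ℕ) + 1 = 1 by omega)]
      have hj1v : ((⟨1, by omega⟩ : Fin (N - 1)) : ℕ) = 1 := rfl
      set j1 : Fin (N - 1) := ⟨1, by omega⟩ with hj1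
      have hsum : ∑ j ∈ Finset.univ.erase i, |A i j|
          = |(1 - 2 * μ 1) / (1 - μ 1)| := by
        have : ∀ j ∈ Finset.univ.erase i, |A i j|
            = if j = j1 then |(1 - 2 * μ 1) / (1 - μ 1)| else 0 := by
          intro j hj
          have hji : j ≠ i := Finset.ne_of_mem_erase hj
          have hjv : (j : ℕ) ≠ 0 := fun h => hji (Fin.ext (by omega))
          by_cases h : j = j1
          · subst h
            rw [hA, if_pos (show (i : ℕ) + 1 = 1 by omega),
              if_neg (show ¬((j1 : ℕ) + 1 = 1) by omega),
              if_pos (show (j1 : ℕ) + 1 = 2 by omega), if_pos rfl]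
          · have hjv1 : (j : ℕ) ≠ 1 := fun h' => h (Fin.ext (by omega))
            rw [hA, if_pos (show (i : ℕ) + 1 = 1 by omega),
              if_neg (show ¬((j : ℕ) + 1 = 1) by omega),
              if_neg (show ¬((j : ℕ) + 1 = 2) by omega), if_neg h, abs_zero]
        rw [Finset.sum_congr rfl this, Finset.sum_ite_eq' _ j1]
        have : j1 ∈ Finset.univ.erase i :=
          Finset.mem_erase.2 ⟨fun h => by simp [Fin.ext_iff, hj1v, h0] at h, Finset.mem_univ _⟩
        simp [this]
      rw [hdiag, hsum]
      have h1 : (0 : ℝ) < 1 - μ 1 := by linarith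
      have h2 : (0 : ℝ) < 2 - μ 1 := by linarith
      rw [abs_div, abs_div, abs_of_pos h1, abs_of_pos h2,
        div_add' _ _ _ h1.ne']
      have habs : |1 - 2 * μ 1| ≤ 1 := abs_le.2 ⟨by linarith, by linarith⟩
      exact (div_le_div_iff_of_pos_right h1).2 (by linarith)
    · rcases eq_or_ne ((i : ℕ) + 1) (N - 1) with hL | hL
      · -- last row
        have hi1 : (i : ℕ) + 1 ≠ 1 := by omega
        have hiv : (i : ℕ) = N - 2 := by omega
        have hdiag : A i i = (2 - lam (N - 1)) / (1 - lam (N - 1)) := by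
          rw [hA, if_neg hi1, if_pos hL,
            if_neg (show ¬((i : ℕ) + 1 = N - 2) by omega), if_pos hL]
        have hj0v : ((⟨N - 3, by omega⟩ : Fin (N - 1)) : ℕ) = N - 3 := rfl
        set j0 : Fin (N - 1) := ⟨N - 3, by omega⟩ with hj0
        have hsum : ∑ j ∈ Finset.univ.erase i, |A i j|
            = |(1 - 2 * lam (N - 1)) / (1 - lam (N - 1))| := by
          have : ∀ j ∈ Finset.univ.erase i, |A i j|
              = if j = j0 then |(1 - 2 * lam (N - 1)) / (1 - lam (N - 1))| else 0 := by
            intro j hj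
            have hji : j ≠ i := Finset.ne_of_mem_erase hj
            have hjv : (j : ℕ) ≠ N - 2 := fun h => hji (Fin.ext (by omega))
            by_cases h : j = j0
            · subst h
              rw [hA, if_neg hi1, if_pos hL,
                if_pos (show (j0 : ℕ) + 1 = N - 2 by omega), if_pos rfl]
            · have hjv1 : (j : ℕ) ≠ N - 3 := fun h' => h (Fin.ext (by omega))
              rw [hA, if_neg hi1, if_pos hL,
                if_neg (show ¬((j : ℕ) + 1 = N - 2) by omega),
                if_neg (show ¬((j : ℕ) + 1 = N - 1) by omega), if_neg h, abs_zero]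
          rw [Finset.sum_congr rfl this, Finset.sum_ite_eq' _ j0]
          have : j0 ∈ Finset.univ.erase i :=
            Finset.mem_erase.2 ⟨fun h => by
              have : (j0 : ℕ) = (i : ℕ) := by rw [h]
              omega, Finset.mem_univ _⟩
          simp [this]
        rw [hdiag, hsum]
        have h1 : (0 : ℝ) < 1 - lam (N - 1) := by linarith
        have h2 : (0 : ℝ) < 2 - lam (N - 1) := by linarith
        rw [abs_div, abs_div, abs_of_pos h1, abs_of_pos h2,
          div_add' _ _ _ h1.ne']
        have habs : |1 - 2 * lam (N - 1)| ≤ 1 := abs_le.2 ⟨by linarith, by linarith⟩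
        exact (div_le_div_iff_of_pos_right h1).2 (by linarith)
      · -- middle rows
        have hi1 : (i : ℕ) + 1 ≠ 1 := by omega
        have hiub : (i : ℕ) + 1 < N - 1 := by have := i.isLt; omega
        obtain ⟨⟨hm0, hm1⟩, ⟨hl0', hl1'⟩, hsum1⟩ :=
          hμlam ((i : ℕ) + 1) (by omega) (by omega)
        have hdiag : A i i = 2 := by
          rw [hA, if_neg hi1, if_neg hL,
            if_neg (show ¬((i : ℕ) + 1 + 1 = (i : ℕ) + 1) by omega), if_pos rfl]
        have hjmv : ((⟨(i : ℕ) - 1, by omega⟩ : Fin (N - 1)) : ℕ) = (i : ℕ) - 1 := rfl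
        have hjpv : ((⟨(i : ℕ) + 1, by omega⟩ : Fin (N - 1)) : ℕ) = (i : ℕ) + 1 := rfl
        set jm : Fin (N - 1) := ⟨(i : ℕ) - 1, by omega⟩ with hjm
        set jp : Fin (N - 1) := ⟨(i : ℕ) + 1, by omega⟩ with hjp
        have hsum : ∑ j ∈ Finset.univ.erase i, |A i j|
            = μ ((i : ℕ) + 1) + lam ((i : ℕ) + 1) := by
          have key : ∀ j ∈ Finset.univ.erase i, |A i j|
              = (if j = jm then μ ((i : ℕ) + 1) else 0)
              + (if j = jp then lam ((i : ℕ) + 1) else 0) := by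
            intro j hj
            have hji : j ≠ i := Finset.ne_of_mem_erase hj
            have hjine : (j : ℕ) ≠ (i : ℕ) := fun h => hji (Fin.ext h)
            have hmp : jm ≠ jp := by
              intro h
              have : (jm : ℕ) = (jp : ℕ) := by rw [h]
              omega
            by_cases h : j = jm
            · subst h
              rw [hA, if_neg hi1, if_neg hL,
                if_pos (show (jm : ℕ) + 1 + 1 = (i : ℕ) + 1 by omega),
                if_pos rfl, if_neg hmp, abs_of_pos hm0]
              ring
            · by_cases h' : j = jp
              · subst h'
                rw [hA, if_neg hi1, if_neg hL,
                  if_neg (show ¬((jp : ℕ) + 1 + 1 = (i : ℕ) + 1) by omega),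
                  if_neg (show ¬((jp : ℕ) = (i : ℕ)) by omega),
                  if_pos (show (jp : ℕ) + 1 = (i : ℕ) + 1 + 1 by omega),
                  if_neg h, if_pos rfl, abs_of_pos hl0']
                ring
              · have h1 : (j : ℕ) ≠ (i : ℕ) - 1 := fun hv => h (Fin.ext (by omega))
                have h2 : (j : ℕ) ≠ (i : ℕ) + 1 := fun hv => h' (Fin.ext (by omega))
                rw [hA, if_neg hi1, if_neg hL,
                  if_neg (show ¬((j : ℕ) + 1 + 1 = (i : ℕ) + 1) by omega),
                  if_neg hjine,
                  if_neg (show ¬((j : ℕ) + 1 = (i : ℕ) + 1 + 1) by omega),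
                  if_neg h, if_neg h', abs_zero, add_zero]
          rw [Finset.sum_congr rfl key, Finset.sum_add_distrib,
            Finset.sum_ite_eq' _ jm, Finset.sum_ite_eq' _ jp]
          have hm : jm ∈ Finset.univ.erase i :=
            Finset.mem_erase.2 ⟨fun h => by
              have : (jm : ℕ) = (i : ℕ) := by rw [h]
              omega, Finset.mem_univ _⟩
          have hp : jp ∈ Finset.univ.erase i :=
            Finset.mem_erase.2 ⟨fun h => by
              have : (jp : ℕ) = (i : ℕ) := by rw [h]
              omega, Finset.mem_univ _⟩
          simp [hm, hp]
        rw [hdiag, hsum, hsum1]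
        rw [abs_of_pos (by norm_num : (0:ℝ) < 2)]
        norm_num
  -- determinant nonzero
  have hdet : A.det ≠ 0 := by
    apply det_ne_zero_of_sum_row_lt_diag
    intro k
    have := hdom k
    simp only [Real.norm_eq_abs]
    linarith
  have hunit : IsUnit A := (Matrix.isUnit_iff_isUnit_det A).2 (isUnit_iff_ne_zero.2 hdet)
  have hABone : A * A⁻¹ = 1 := Matrix.mul_nonsing_inv A (isUnit_iff_ne_zero.2 hdet)
  -- key estimate: ‖y‖_∞ ≤ ‖Ay‖_∞
  have key : ∀ y : Fin (N - 1) → ℝ, ∃ k, ∀ i, |y i| ≤ |A.mulVec y k| := by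
    intro y
    obtain ⟨k, hk⟩ := Finite.exists_max (fun k => |y k|)
    refine ⟨k, fun i => (hk i).trans ?_⟩
    have hsplit : A.mulVec y k = A k k * y k + ∑ j ∈ Finset.univ.erase k, A k j * y j := by
      rw [Matrix.mulVec, dotProduct,
        ← Finset.add_sum_erase _ _ (Finset.mem_univ k)]
    have htri : |A k k * y k| - |∑ j ∈ Finset.univ.erase k, A k j * y j| ≤ |A.mulVec y k| := by
      rw [hsplit]
      have := abs_sub_abs_le_abs_sub (A k k * y k)
        (-(∑ j ∈ Finset.univ.erase k, A k j * y j))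
      rw [abs_neg, sub_neg_eq_add] at this
      exact this
    have hS : |∑ j ∈ Finset.univ.erase k, A k j * y j|
        ≤ (∑ j ∈ Finset.univ.erase k, |A k j|) * |y k| := by
      calc |∑ j ∈ Finset.univ.erase k, A k j * y j|
          ≤ ∑ j ∈ Finset.univ.erase k, |A k j * y j| := Finset.abs_sum_le_sum_abs _ _
        _ ≤ ∑ j ∈ Finset.univ.erase k, |A k j| * |y k| := by
            refine Finset.sum_le_sum fun j _ => ?_
            rw [abs_mul]
            exact mul_le_mul_of_nonneg_left (hk j) (abs_nonneg _)
        _ = _ := by rw [Finset.sum_mul]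
    have hkk := hdom k
    nlinarith [htri, hS, hkk, abs_nonneg (y k), abs_mul (A k k) (y k)]
  -- row sums of the inverse
  have hrow : ∀ i, ∑ j, |A⁻¹ i j| ≤ 1 := by
    intro i
    set s : Fin (N - 1) → ℝ := fun j => if 0 ≤ A⁻¹ i j then 1 else -1 with hs
    set y := A⁻¹.mulVec s with hy
    have hyi : y i = ∑ j, |A⁻¹ i j| := by
      rw [hy, Matrix.mulVec, dotProduct]
      refine Finset.sum_congr rfl fun j _ => ?_
      by_cases h : 0 ≤ A⁻¹ i j
      · simp [hs, h, abs_of_nonneg h]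
      · simp [hs, h, abs_of_neg (lt_of_not_ge h)]
    have hAy : A.mulVec y = s := by
      rw [hy, Matrix.mulVec_mulVec, hABone, Matrix.one_mulVec]
    obtain ⟨k, hk⟩ := key y
    have h1 := hk i
    rw [hAy] at h1
    have h2 : |s k| ≤ 1 := by
      by_cases h : 0 ≤ A⁻¹ i k <;> simp [hs, h]
    calc ∑ j, |A⁻¹ i j| = y i := hyi.symm
      _ ≤ |y i| := le_abs_self _
      _ ≤ 1 := h1.trans h2
  refine ⟨hdom, hunit, ?_⟩
  rw [rowSumNorm]
  exact ciSup_le hrow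
end

section
/- Let N ≥ 5, let μ_j, λ_j ∈ (0,1) with μ_j + λ_j = 1 for j = 1,…,N−1, set β₁ := (1−2μ₁)/(2(2−μ₁)) and β₂ := (1−2λ_{N−1})/(2(2−λ_{N−1})), and let A_t ∈ ℝ^{(N−1)×(N−1)} be the tridiagonal matrix with rows indexed by 1,…,N−1 given by: row 1 has entries 2−μ₁ and (1−2μ₁)/2 in columns 1, 2; row 2 has entries μ₂, 2−β₁μ₂, λ₂ in columns 1, 2, 3; row j for 3 ≤ j ≤ N−3 has entries μ_j, 2, λ_j in columns j−1, j, j+1; row N−2 has entries μ_{N−2}, 2−β₂λ_{N−2}, λ_{N−2} in columns N−3, N−2, N−1; row N−1 has entries (1−2λ_{N−1})/2 and 2−λ_{N−1} in columns N−2, N−1; all other entries are zero. Then β₁, β₂ ∈ (−1/2, 1/4), A_t is strictly diagonally dominant by rows with min_i (|a_{ii}| − Σ_{j≠i} |a_{ij}|) ≥ 1/2, and consequently A_t is invertible with ‖A_t⁻¹‖_∞ ≤ 2. -/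
open Matrix

lemma sum_erase_eq_single' {n : ℕ} (i b : Fin n) (f : Fin n → ℝ) (hb : b ≠ i)
    (h0 : ∀ j, j ≠ i → j ≠ b → f j = 0) :
    ∑ j ∈ Finset.univ.erase i, f j = f b := by
  apply Finset.sum_eq_single_of_mem b (Finset.mem_erase.2 ⟨hb, Finset.mem_univ b⟩)
  exact fun c hc hcb => h0 c (Finset.ne_of_mem_erase hc) hcb

lemma sum_erase_eq_pair' {n : ℕ} (i b c : Fin n) (f : Fin n → ℝ) (hb : b ≠ i) (hc : c ≠ i)
    (hbc : b ≠ c) (h0 : ∀ j, j ≠ i → j ≠ b → j ≠ c → f j = 0) :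
    ∑ j ∈ Finset.univ.erase i, f j = f b + f c := by
  rw [← Finset.sum_pair hbc]
  refine (Finset.sum_subset ?_ ?_).symm
  · intro x hx
    rcases Finset.mem_insert.1 hx with h | h
    · subst h; exact Finset.mem_erase.2 ⟨hb, Finset.mem_univ _⟩
    · rw [Finset.mem_singleton] at h; subst h
      exact Finset.mem_erase.2 ⟨hc, Finset.mem_univ _⟩
  · intro x hx hnx
    simp only [Finset.mem_insert, Finset.mem_singleton, not_or] at hnx
    exact h0 x (Finset.ne_of_mem_erase hx) hnx.1 hnx.2

lemma varah_aux {n : ℕ} (hn : 0 < n) (A : Matrix (Fin n) (Fin n) ℝ)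
    (hdd : ∀ i, ∑ j ∈ Finset.univ.erase i, |A i j| + 1 / 2 ≤ |A i i|) :
    IsUnit A ∧ rowSumNorm A⁻¹ ≤ 2 := by
  have hdet : A.det ≠ 0 := by
    apply det_ne_zero_of_sum_row_lt_diag
    intro k
    have := hdd k
    simp only [Real.norm_eq_abs]
    linarith
  have hunit : IsUnit A := (Matrix.isUnit_iff_isUnit_det A).2 (isUnit_iff_ne_zero.2 hdet)
  refine ⟨hunit, ?_⟩
  have hAB : A * A⁻¹ = 1 := Matrix.mul_nonsing_inv A (isUnit_iff_ne_zero.2 hdet)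
  have key : ∀ i, ∑ j, |A⁻¹ i j| ≤ 2 := by
    intro i
    set y : Fin n → ℝ := fun j => if 0 ≤ A⁻¹ i j then 1 else -1 with hy
    set x : Fin n → ℝ := A⁻¹ *ᵥ y with hxdef
    have hx : A *ᵥ x = y := by
      rw [hxdef, Matrix.mulVec_mulVec, hAB, Matrix.one_mulVec]
    have hxi : x i = ∑ j, |A⁻¹ i j| := by
      rw [hxdef]
      simp only [Matrix.mulVec, dotProduct, hy]
      apply Finset.sum_congr rfl
      intro j _
      by_cases h : 0 ≤ A⁻¹ i j
      · rw [if_pos h, abs_of_nonneg h, mul_one]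
      · rw [if_neg h, abs_of_neg (lt_of_not_ge h), mul_neg_one]
    have hyb : ∀ j, |y j| ≤ 1 := by
      intro j; rw [hy]; dsimp only; split_ifs <;> simp
    obtain ⟨k, -, hk⟩ := Finset.exists_max_image Finset.univ (fun j => |x j|)
      ⟨⟨0, hn⟩, Finset.mem_univ _⟩
    have hk' : ∀ j, |x j| ≤ |x k| := fun j => hk j (Finset.mem_univ j)
    have hyk : y k = A k k * x k + ∑ j ∈ Finset.univ.erase k, A k j * x j := by
      rw [← hx]
      simp only [Matrix.mulVec, dotProduct]
      rw [← Finset.add_sum_erase _ _ (Finset.mem_univ k)]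
    have h1 : |A k k * x k| ≤ 1 + ∑ j ∈ Finset.univ.erase k, |A k j| * |x k| := by
      have : A k k * x k = y k - ∑ j ∈ Finset.univ.erase k, A k j * x j := by
        rw [hyk]; ring
      rw [this]
      calc |y k - ∑ j ∈ Finset.univ.erase k, A k j * x j|
          ≤ |y k| + |∑ j ∈ Finset.univ.erase k, A k j * x j| := abs_sub _ _
        _ ≤ 1 + ∑ j ∈ Finset.univ.erase k, |A k j| * |x k| := by
            gcongr
            · exact hyb k
            · calc |∑ j ∈ Finset.univ.erase k, A k j * x j|
                  ≤ ∑ j ∈ Finset.univ.erase k, |A k j * x j| :=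
                    Finset.abs_sum_le_sum_abs _ _
                _ ≤ ∑ j ∈ Finset.univ.erase k, |A k j| * |x k| := by
                    apply Finset.sum_le_sum
                    intro j _
                    rw [abs_mul]
                    exact mul_le_mul_of_nonneg_left (hk' j) (abs_nonneg _)
    have hxk2 : |x k| ≤ 2 := by
      have hdk := hdd k
      rw [abs_mul] at h1
      rw [← Finset.sum_mul] at h1
      nlinarith [abs_nonneg (x k), abs_nonneg (A k k),
        mul_le_mul_of_nonneg_right hdk (abs_nonneg (x k))]
    calc ∑ j, |A⁻¹ i j| = x i := hxi.symm
      _ ≤ |x i| := le_abs_self _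
      _ ≤ |x k| := hk' i
      _ ≤ 2 := hxk2
  haveI : Nonempty (Fin n) := ⟨⟨0, hn⟩⟩
  exact ciSup_le key

set_option maxHeartbeats 1600000 in
/-- **The transformed not-a-knot system `A_t` is strictly diagonally dominant.**
Let `N ≥ 5`, `μ_j, λ_j ∈ (0,1)` with `μ_j + λ_j = 1` for `j = 1, …, N−1`, and set
`β₁ = (1−2μ₁)/(2(2−μ₁))`, `β₂ = (1−2λ_{N−1})/(2(2−λ_{N−1}))`.  Let
`A_t ∈ ℝ^{(N−1)×(N−1)}` have rows indexed by `1, …, N−1` (here realized by `Fin (N−1)`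
with index `i` standing for row `i+1`): row `1` has entries `2−μ₁` and `(1−2μ₁)/2` in
columns `1, 2`; row `2` has entries `μ₂, 2−β₁μ₂, λ₂` in columns `1, 2, 3`; row `j`
(`3 ≤ j ≤ N−3`) has entries `μ_j, 2, λ_j` in columns `j−1, j, j+1`; row `N−2` has entries
`μ_{N−2}, 2−β₂λ_{N−2}, λ_{N−2}` in columns `N−3, N−2, N−1`; row `N−1` has entries
`(1−2λ_{N−1})/2` and `2−λ_{N−1}` in columns `N−2, N−1`; all other entries zero.  Then
`β₁, β₂ ∈ (−1/2, 1/4)`, `A_t` is strictly diagonally dominant by rows with dominance gap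
at least `1/2`, and consequently `A_t` is invertible with `‖A_t⁻¹‖_∞ ≤ 2`. -/
theorem stmt12 (N : ℕ) (hN : 5 ≤ N)
    (μ lam : ℕ → ℝ)
    (hμlam : ∀ j, 1 ≤ j → j ≤ N - 1 →
      μ j ∈ Set.Ioo (0 : ℝ) 1 ∧ lam j ∈ Set.Ioo (0 : ℝ) 1 ∧ μ j + lam j = 1)
    (β₁ β₂ : ℝ)
    (hβ₁ : β₁ = (1 - 2 * μ 1) / (2 * (2 - μ 1)))
    (hβ₂ : β₂ = (1 - 2 * lam (N - 1)) / (2 * (2 - lam (N - 1))))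
    (A : Matrix (Fin (N - 1)) (Fin (N - 1)) ℝ)
    (hA : ∀ i j : Fin (N - 1), A i j =
      if (i : ℕ) + 1 = 1 then
        (if (j : ℕ) + 1 = 1 then 2 - μ 1
         else if (j : ℕ) + 1 = 2 then (1 - 2 * μ 1) / 2 else 0)
      else if (i : ℕ) + 1 = 2 then
        (if (j : ℕ) + 1 = 1 then μ 2
         else if (j : ℕ) + 1 = 2 then 2 - β₁ * μ 2
         else if (j : ℕ) + 1 = 3 then lam 2 else 0)
      else if (i : ℕ) + 1 = N - 2 then
        (if (j : ℕ) + 1 = N - 3 then μ (N - 2)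
         else if (j : ℕ) + 1 = N - 2 then 2 - β₂ * lam (N - 2)
         else if (j : ℕ) + 1 = N - 1 then lam (N - 2) else 0)
      else if (i : ℕ) + 1 = N - 1 then
        (if (j : ℕ) + 1 = N - 2 then (1 - 2 * lam (N - 1)) / 2
         else if (j : ℕ) + 1 = N - 1 then 2 - lam (N - 1) else 0)
      else
        (if (j : ℕ) + 1 + 1 = (i : ℕ) + 1 then μ ((i : ℕ) + 1)
         else if (j : ℕ) = (i : ℕ) then 2
         else if (j : ℕ) + 1 = (i : ℕ) + 1 + 1 then lam ((i : ℕ) + 1) else 0)) :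
    β₁ ∈ Set.Ioo (-(1 / 2) : ℝ) (1 / 4) ∧ β₂ ∈ Set.Ioo (-(1 / 2) : ℝ) (1 / 4) ∧
    (∀ i, ∑ j ∈ Finset.univ.erase i, |A i j| + 1 / 2 ≤ |A i i|) ∧
    IsUnit A ∧ rowSumNorm A⁻¹ ≤ 2 := by
  obtain ⟨hμ1, hl1, hs1⟩ := hμlam 1 (by omega) (by omega)
  obtain ⟨hμN, hlN, hsN⟩ := hμlam (N - 1) (by omega) (by omega)
  obtain ⟨hμ10, hμ11⟩ := hμ1
  obtain ⟨hlN0, hlN1⟩ := hlN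
  have hb1 : β₁ ∈ Set.Ioo (-(1 / 2) : ℝ) (1 / 4) := by
    constructor
    · rw [hβ₁, lt_div_iff₀ (by nlinarith)]; nlinarith
    · rw [hβ₁, div_lt_iff₀ (by nlinarith)]; nlinarith
  have hb2 : β₂ ∈ Set.Ioo (-(1 / 2) : ℝ) (1 / 4) := by
    constructor
    · rw [hβ₂, lt_div_iff₀ (by nlinarith)]; nlinarith
    · rw [hβ₂, div_lt_iff₀ (by nlinarith)]; nlinarith
  obtain ⟨hb1l, hb1r⟩ := hb1
  obtain ⟨hb2l, hb2r⟩ := hb2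
  have hdd : ∀ i, ∑ j ∈ Finset.univ.erase i, |A i j| + 1 / 2 ≤ |A i i| := by
    intro i
    have hi : (i : ℕ) < N - 1 := i.isLt
    by_cases h1 : (i : ℕ) + 1 = 1
    · -- row 1
      set b : Fin (N - 1) := ⟨1, by omega⟩ with hbdef
      have hbval : (b : ℕ) = 1 := rfl
      have hbne : b ≠ i := fun h => by
        have := congrArg Fin.val h; omega
      have hdiag : A i i = 2 - μ 1 := by
        rw [hA]; split_ifs <;> first | rfl | omega
      have hb : A i b = (1 - 2 * μ 1) / 2 := by
        rw [hA]; split_ifs <;> first | rfl | omega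
      have hsum : ∑ j ∈ Finset.univ.erase i, |A i j| = |A i b| := by
        apply sum_erase_eq_single' i b _ hbne
        intro j hji hjb
        have hji' : (j : ℕ) ≠ (i : ℕ) := fun h => hji (Fin.ext h)
        have hjb' : (j : ℕ) ≠ (b : ℕ) := fun h => hjb (Fin.ext h)
        have hz : A i j = 0 := by
          rw [hA]; split_ifs <;> first | rfl | omega
        rw [hz, abs_zero]
      rw [hsum, hdiag, hb, abs_of_pos (show (0:ℝ) < 2 - μ 1 by linarith)]
      rcases abs_cases ((1 - 2 * μ 1) / 2) with ⟨h, -⟩ | ⟨h, -⟩ <;> rw [h] <;> linarith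
    · by_cases h2 : (i : ℕ) + 1 = 2
      · -- row 2
        obtain ⟨⟨hμ20, hμ21⟩, ⟨hl20, hl21⟩, hs2⟩ := hμlam 2 (by omega) (by omega)
        set b : Fin (N - 1) := ⟨0, by omega⟩ with hbdef
        set c : Fin (N - 1) := ⟨2, by omega⟩ with hcdef
        have hbval : (b : ℕ) = 0 := rfl
        have hcval : (c : ℕ) = 2 := rfl
        have hbne : b ≠ i := fun h => by have := congrArg Fin.val h; omega
        have hcne : c ≠ i := fun h => by have := congrArg Fin.val h; omega
        have hbc : b ≠ c := fun h => by have := congrArg Fin.val h; omega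
        have hdiag : A i i = 2 - β₁ * μ 2 := by
          rw [hA]; split_ifs <;> first | rfl | omega
        have hb : A i b = μ 2 := by
          rw [hA]; split_ifs <;> first | rfl | omega
        have hc : A i c = lam 2 := by
          rw [hA]; split_ifs <;> first | rfl | omega
        have hsum : ∑ j ∈ Finset.univ.erase i, |A i j| = |A i b| + |A i c| := by
          apply sum_erase_eq_pair' i b c _ hbne hcne hbc
          intro j hji hjb hjc
          have hji' : (j : ℕ) ≠ (i : ℕ) := fun h => hji (Fin.ext h)
          have hjb' : (j : ℕ) ≠ (b : ℕ) := fun h => hjb (Fin.ext h)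
          have hjc' : (j : ℕ) ≠ (c : ℕ) := fun h => hjc (Fin.ext h)
          have hz : A i j = 0 := by
            rw [hA]; split_ifs <;> first | rfl | omega
          rw [hz, abs_zero]
        have hkey : β₁ * μ 2 ≤ 1 / 2 := by nlinarith [mul_pos (sub_pos.2 hb1r) hμ20]
        rw [hsum, hdiag, hb, hc, abs_of_pos hμ20, abs_of_pos hl20,
          abs_of_pos (show (0:ℝ) < 2 - β₁ * μ 2 by linarith)]
        linarith
      · by_cases hm2 : (i : ℕ) + 1 = N - 2
        · -- row N-2
          obtain ⟨⟨hμ0, hμ1'⟩, ⟨hl0, hl1'⟩, hs⟩ := hμlam (N - 2) (by omega) (by omega)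
          set b : Fin (N - 1) := ⟨N - 4, by omega⟩ with hbdef
          set c : Fin (N - 1) := ⟨N - 2, by omega⟩ with hcdef
          have hbval : (b : ℕ) = N - 4 := rfl
          have hcval : (c : ℕ) = N - 2 := rfl
          have hbne : b ≠ i := fun h => by have := congrArg Fin.val h; omega
          have hcne : c ≠ i := fun h => by have := congrArg Fin.val h; omega
          have hbc : b ≠ c := fun h => by have := congrArg Fin.val h; omega
          have hdiag : A i i = 2 - β₂ * lam (N - 2) := by
            rw [hA]; split_ifs <;> first | rfl | omega
          have hb : A i b = μ (N - 2) := by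
            rw [hA]; split_ifs <;> first | rfl | omega
          have hc : A i c = lam (N - 2) := by
            rw [hA]; split_ifs <;> first | rfl | omega
          have hsum : ∑ j ∈ Finset.univ.erase i, |A i j| = |A i b| + |A i c| := by
            apply sum_erase_eq_pair' i b c _ hbne hcne hbc
            intro j hji hjb hjc
            have hji' : (j : ℕ) ≠ (i : ℕ) := fun h => hji (Fin.ext h)
            have hjb' : (j : ℕ) ≠ (b : ℕ) := fun h => hjb (Fin.ext h)
            have hjc' : (j : ℕ) ≠ (c : ℕ) := fun h => hjc (Fin.ext h)
            have hz : A i j = 0 := by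
              rw [hA]; split_ifs <;> first | rfl | omega
            rw [hz, abs_zero]
          have hkey : β₂ * lam (N - 2) ≤ 1 / 2 := by
            nlinarith [mul_pos (sub_pos.2 hb2r) hl0]
          rw [hsum, hdiag, hb, hc, abs_of_pos hμ0, abs_of_pos hl0,
            abs_of_pos (show (0:ℝ) < 2 - β₂ * lam (N - 2) by linarith)]
          linarith
        · by_cases hm1 : (i : ℕ) + 1 = N - 1
          · -- row N-1
            set b : Fin (N - 1) := ⟨N - 3, by omega⟩ with hbdef
            have hbval : (b : ℕ) = N - 3 := rfl
            have hbne : b ≠ i := fun h => by have := congrArg Fin.val h; omega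
            have hdiag : A i i = 2 - lam (N - 1) := by
              rw [hA]; split_ifs <;> first | rfl | omega
            have hb : A i b = (1 - 2 * lam (N - 1)) / 2 := by
              rw [hA]; split_ifs <;> first | rfl | omega
            have hsum : ∑ j ∈ Finset.univ.erase i, |A i j| = |A i b| := by
              apply sum_erase_eq_single' i b _ hbne
              intro j hji hjb
              have hji' : (j : ℕ) ≠ (i : ℕ) := fun h => hji (Fin.ext h)
              have hjb' : (j : ℕ) ≠ (b : ℕ) := fun h => hjb (Fin.ext h)
              have hz : A i j = 0 := by
                rw [hA]; split_ifs <;> first | rfl | omega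
              rw [hz, abs_zero]
            rw [hsum, hdiag, hb, abs_of_pos (show (0:ℝ) < 2 - lam (N - 1) by linarith)]
            rcases abs_cases ((1 - 2 * lam (N - 1)) / 2) with ⟨h, -⟩ | ⟨h, -⟩ <;>
              rw [h] <;> linarith
          · -- interior row
            obtain ⟨⟨hμ0, hμ1'⟩, ⟨hl0, hl1'⟩, hs⟩ :=
              hμlam ((i : ℕ) + 1) (by omega) (by omega)
            set b : Fin (N - 1) := ⟨(i : ℕ) - 1, by omega⟩ with hbdef
            set c : Fin (N - 1) := ⟨(i : ℕ) + 1, by omega⟩ with hcdef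
            have hbval : (b : ℕ) = (i : ℕ) - 1 := rfl
            have hcval : (c : ℕ) = (i : ℕ) + 1 := rfl
            have hbne : b ≠ i := fun h => by have := congrArg Fin.val h; omega
            have hcne : c ≠ i := fun h => by have := congrArg Fin.val h; omega
            have hbc : b ≠ c := fun h => by have := congrArg Fin.val h; omega
            have hdiag : A i i = 2 := by
              rw [hA]; split_ifs <;> first | rfl | omega
            have hb : A i b = μ ((i : ℕ) + 1) := by
              rw [hA]; split_ifs <;> first | rfl | omega
            have hc : A i c = lam ((i : ℕ) + 1) := by
              rw [hA]; split_ifs <;> first | rfl | omega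
            have hsum : ∑ j ∈ Finset.univ.erase i, |A i j| = |A i b| + |A i c| := by
              apply sum_erase_eq_pair' i b c _ hbne hcne hbc
              intro j hji hjb hjc
              have hji' : (j : ℕ) ≠ (i : ℕ) := fun h => hji (Fin.ext h)
              have hjb' : (j : ℕ) ≠ (b : ℕ) := fun h => hjb (Fin.ext h)
              have hjc' : (j : ℕ) ≠ (c : ℕ) := fun h => hjc (Fin.ext h)
              have hz : A i j = 0 := by
                rw [hA]; split_ifs <;> first | rfl | omega
              rw [hz, abs_zero]
            rw [hsum, hdiag, hb, hc, abs_of_pos hμ0, abs_of_pos hl0]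
            rw [abs_of_pos (by norm_num : (0:ℝ) < 2)]
            linarith
  obtain ⟨hu, hnorm⟩ := varah_aux (by omega) A hdd
  exact ⟨⟨hb1l, hb1r⟩, ⟨hb2l, hb2r⟩, hdd, hu, hnorm⟩
end
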